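/- arXiv:1103.5127 — 8 statements merged into one kernel-verified Lean document; each statement's English description precedes it below -/
import Mathlib

section
/- If G is a simple connected graph of even size (i.e., with an even number of edges), then there exists an edge-friendly binary edge labeling f of G which is strongly edge-balanced, that is, e_f(0) = e_f(1) and v_f(0) = v_f(1). -/
/-!
Edge-friendly labelings (Krop, Lee, Raridan).  A binary edge labeling of a
graph `G` is `f : Sym2 V → Fin 2` (only its values on edges matter).  For
`i : Fin 2`, `nbr G f i v` is the set `N_i(v)` of neighbors of `v` joined to
`v` by an `i`-edge, `edgeCount G f i` is `e_f(i)`, and `vertexLabel G f v` is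
the induced partial vertex label `f⁺(v)` (with `none` meaning unlabeled).
-/

open Finset

attribute [local instance] Classical.propDecidable

noncomputable section

namespace EdgeLabeling

variable {V : Type*} [Fintype V]

/-- `N_i(v)`: neighbors of `v` joined to `v` by an edge labeled `i`. -/
def nbr (G : SimpleGraph V) (f : Sym2 V → Fin 2) (i : Fin 2) (v : V) : Finset V :=
  Finset.univ.filter fun u => G.Adj v u ∧ f s(v, u) = i

/-- `e_f(i)`: the number of edges of `G` labeled `i`. -/
def edgeCount (G : SimpleGraph V) (f : Sym2 V → Fin 2) (i : Fin 2) : ℕ :=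
  (G.edgeFinset.filter fun e => f e = i).card

/-- `f` is edge-friendly: `|e_f(0) - e_f(1)| ≤ 1`. -/
def EdgeFriendly (G : SimpleGraph V) (f : Sym2 V → Fin 2) : Prop :=
  |(edgeCount G f 0 : ℤ) - (edgeCount G f 1 : ℤ)| ≤ 1

/-- The induced partial vertex labeling `f⁺`. -/
def vertexLabel (G : SimpleGraph V) (f : Sym2 V → Fin 2) (v : V) : Option (Fin 2) :=
  if (nbr G f 1 v).card < (nbr G f 0 v).card then some 0
  else if (nbr G f 0 v).card < (nbr G f 1 v).card then some 1
  else none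

/-- `v` is unlabeled under the induced partial vertex labeling. -/
def Unlabeled (G : SimpleGraph V) (f : Sym2 V → Fin 2) (v : V) : Prop :=
  vertexLabel G f v = none

/-- `v_f(i)`: the number of vertices labeled `i` by `f⁺`. -/
def vertexCount (G : SimpleGraph V) (f : Sym2 V → Fin 2) (i : Fin 2) : ℕ :=
  (Finset.univ.filter fun v => vertexLabel G f v = some i).card

/-- `G` is opinionated: some edge-friendly labeling leaves no vertex unlabeled. -/
def Opinionated (G : SimpleGraph V) : Prop :=
  ∃ f : Sym2 V → Fin 2, EdgeFriendly G f ∧ ∀ v : V, ¬ Unlabeled G f v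

end EdgeLabeling

open EdgeLabeling

namespace SEB

variable {V : Type*}

def slot0 (t : V × V × V) : Sym2 V := s(t.1, t.2.1)
def slot1 (t : V × V × V) : Sym2 V := s(t.2.1, t.2.2)
def outer (t : V × V × V) : V × V := (t.1, t.2.2)

def Valid (G : SimpleGraph V) (t : V × V × V) : Prop :=
  G.Adj t.1 t.2.1 ∧ G.Adj t.2.1 t.2.2 ∧ t.1 ≠ t.2.2

def ConnOn (G : SimpleGraph V) (s : Finset V) : Prop :=
  s.Nonempty ∧ ∀ a ∈ s, ∀ b ∈ s, ∃ w : G.Walk a b, ∀ x ∈ w.support, x ∈ s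

def term (v : V) (p : V × V) : ℤ :=
  (if v = p.1 then 1 else 0) - (if v = p.2 then 1 else 0)

def dlt (M : Multiset (V × V)) (v : V) : ℤ := (M.map (term v)).sum

lemma sym2_ex (e : Sym2 V) : ∃ x y, e = s(x, y) :=
  Sym2.ind (fun x y => ⟨x, y, rfl⟩) e

/-- Pair up an even multiset of distinct edges all through a common vertex `u`. -/
lemma pair_at_vertex (G : SimpleGraph V) (u : V) :
    ∀ n (Q : Multiset (Sym2 V)), Multiset.card Q = n → Q.Nodup → Even n →
      (∀ e ∈ Q, e ∈ G.edgeSet ∧ u ∈ e) →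
      ∃ T : Multiset (V × V × V), (∀ t ∈ T, Valid G t) ∧
        T.map slot0 + T.map slot1 = Q := by
  intro n
  induction n using Nat.strong_induction_on with
  | _ n ih =>
    intro Q hQ hnd hev hmem
    rcases n with _ | n
    · have : Q = 0 := Multiset.card_eq_zero.mp hQ
      exact ⟨0, by simp, by simp [this]⟩
    · have hn1 : 1 ≤ n := by rcases hev with ⟨k, hk⟩; omega
      have h0 : 0 < Multiset.card Q := by omega
      obtain ⟨e1, he1⟩ := Multiset.card_pos_iff_exists_mem.mp h0
      have hQ1 : Q = e1 ::ₘ Q.erase e1 := (Multiset.cons_erase he1).symm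
      have hc1 : Multiset.card (Q.erase e1) = n := by
        rw [Multiset.card_erase_of_mem he1, hQ]; rfl
      have h02 : 0 < Multiset.card (Q.erase e1) := by omega
      obtain ⟨e2, he2⟩ := Multiset.card_pos_iff_exists_mem.mp h02
      have he2Q : e2 ∈ Q := Multiset.mem_of_mem_erase he2
      have hne : e1 ≠ e2 := by
        intro h; subst h
        exact (Multiset.nodup_cons.mp (hQ1 ▸ hnd)).1 he2
      obtain ⟨hs1, hu1⟩ := hmem e1 he1
      obtain ⟨hs2, hu2⟩ := hmem e2 he2Q
      obtain ⟨a, ha⟩ := Sym2.mem_iff_exists.mp hu1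
      obtain ⟨b, hb⟩ := Sym2.mem_iff_exists.mp hu2
      have hadja : G.Adj u a := by rw [ha] at hs1; exact hs1
      have hadjb : G.Adj u b := by rw [hb] at hs2; exact hs2
      have hab : a ≠ b := by
        intro h; apply hne; rw [ha, hb, h]
      set Q2 := (Q.erase e1).erase e2 with hQ2
      have hQr : Q.erase e1 = e2 ::ₘ Q2 := (Multiset.cons_erase he2).symm
      have hc2 : Multiset.card Q2 = n - 1 := by
        rw [hQ2, Multiset.card_erase_of_mem he2, hc1]; rfl
      have hnd2 : Q2.Nodup := by
        apply Multiset.Nodup.erase; apply Multiset.Nodup.erase; exact hnd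
      have hev2 : Even (n - 1) := by
        rcases hev with ⟨k, hk⟩; exact ⟨k - 1, by omega⟩
      obtain ⟨T, hTval, hTeq⟩ := ih (n-1) (by omega) Q2 hc2 hnd2 hev2
        (fun e he => hmem e (Multiset.mem_of_mem_erase (Multiset.mem_of_mem_erase he)))
      refine ⟨(a, u, b) ::ₘ T, ?_, ?_⟩
      · intro t ht
        rcases Multiset.mem_cons.mp ht with h | h
        · subst h; exact ⟨hadja.symm, hadjb, hab⟩
        · exact hTval t h
      · have h1 : slot0 (a, u, b) = e1 := by
          show s(a, u) = e1; rw [ha, Sym2.eq_swap]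
        have h2 : slot1 (a, u, b) = e2 := by
          show s(u, b) = e2; rw [hb]
        rw [hQ1, hQr]
        simp only [Multiset.map_cons, h1, h2, Multiset.cons_add, Multiset.add_cons]
        rw [hTeq]; exact Multiset.cons_swap _ _ _


lemma dlt_cons (p : V × V) (M : Multiset (V × V)) (v : V) :
    dlt (p ::ₘ M) v = term v p + dlt M v := by
  simp [dlt]

lemma abs_term_le (v : V) (p : V × V) : |term v p| ≤ 1 := by
  unfold term; split <;> split <;> simp

/-- Orientation lemma: any multiset of pairs can be reoriented so that every
vertex has out-degree and in-degree differing by at most one. -/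
lemma orient : ∀ n (M : Multiset (V × V)), Multiset.card M = n →
    ∃ M' : Multiset (V × V), M'.map Sym2.mk.uncurry = M.map Sym2.mk.uncurry ∧ ∀ v, |dlt M' v| ≤ 1 := by
  intro n
  induction n using Nat.strong_induction_on with
  | _ n ih =>
    intro M hM
    by_cases hloop : ∃ p ∈ M, p.1 = p.2
    · obtain ⟨p, hp, hpl⟩ := hloop
      have hc : Multiset.card (M.erase p) = n - 1 := by
        rw [Multiset.card_erase_of_mem hp, hM]; rfl
      have hn : 0 < n := by rw [← hM]; exact Multiset.card_pos_iff_exists_mem.mpr ⟨p, hp⟩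
      obtain ⟨M0, hmap, hbal⟩ := ih (n-1) (by omega) (M.erase p) hc
      refine ⟨p ::ₘ M0, ?_, ?_⟩
      · rw [Multiset.map_cons, hmap, ← Multiset.map_cons, Multiset.cons_erase hp]
      · intro v
        rw [dlt_cons]
        have : term v p = 0 := by unfold term; rw [hpl]; ring
        rw [this, zero_add]; exact hbal v
    · by_cases htwo : ∃ (v : V) (p : V × V) (q : V × V), p ∈ M ∧ q ∈ M.erase p ∧
        (p.1 = v ∨ p.2 = v) ∧ (q.1 = v ∨ q.2 = v)
      · obtain ⟨v, p, q, hp, hq, hpv, hqv⟩ := htwo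
        have hqM : q ∈ M := Multiset.mem_of_mem_erase hq
        set x := if p.1 = v then p.2 else p.1 with hx
        set y := if q.1 = v then q.2 else q.1 with hy
        have keyp : Sym2.mk.uncurry p = s(v, x) := by
          rcases hpv with h | h
          · rw [hx, if_pos h, ← h]; rfl
          · by_cases h1 : p.1 = v
            · rw [hx, if_pos h1, ← h1]; rfl
            · rw [hx, if_neg h1, ← h, Sym2.eq_swap]; rfl
        have keyq : Sym2.mk.uncurry q = s(v, y) := by
          rcases hqv with h | h
          · rw [hy, if_pos h, ← h]; rfl
          · by_cases h1 : q.1 = v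
            · rw [hy, if_pos h1, ← h1]; rfl
            · rw [hy, if_neg h1, ← h, Sym2.eq_swap]; rfl
        set R := (M.erase p).erase q with hR
        have hMq : M.erase p = q ::ₘ R := (Multiset.cons_erase hq).symm
        have hMp : M = p ::ₘ q ::ₘ R := by rw [← hMq, Multiset.cons_erase hp]
        have hcR : Multiset.card ((x, y) ::ₘ R) = n - 1 := by
          have : Multiset.card M = Multiset.card R + 2 := by rw [hMp]; simp
          rw [Multiset.card_cons]; omega
        have hn : 0 < n := by rw [← hM]; exact Multiset.card_pos_iff_exists_mem.mpr ⟨p, hp⟩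
        obtain ⟨M0, hmap, hbal⟩ := ih (n-1) (by omega) ((x, y) ::ₘ R) hcR
        have hxy : s(x, y) ∈ M0.map Sym2.mk.uncurry := by
          rw [hmap, Multiset.map_cons]; exact Multiset.mem_cons_self _ _
        obtain ⟨q', hq', hq'eq⟩ := Multiset.mem_map.mp hxy
        set M2 := M0.erase q' with hM2
        have hM0 : M0 = q' ::ₘ M2 := (Multiset.cons_erase hq').symm
        have hq'mk : Sym2.mk.uncurry q' = s(q'.1, q'.2) := rfl
        have hcase : (q'.1 = x ∧ q'.2 = y) ∨ (q'.1 = y ∧ q'.2 = x) := by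
          rw [hq'mk] at hq'eq; exact Sym2.eq_iff.mp hq'eq
        have hM2map : M2.map Sym2.mk.uncurry = R.map Sym2.mk.uncurry := by
          have h1 : M0.map Sym2.mk.uncurry = Sym2.mk.uncurry q' ::ₘ M2.map Sym2.mk.uncurry := by
            rw [hM0, Multiset.map_cons]
          rw [h1, hq'eq, Multiset.map_cons] at hmap
          exact (Multiset.cons_inj_right _).mp hmap
        -- replacement pair
        obtain ⟨a, b, hab_mk1, hab_mk2, hab_term⟩ :
            ∃ a b : V × V, Sym2.mk.uncurry a = s(v, x) ∧ Sym2.mk.uncurry b = s(v, y) ∧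
              ∀ w, term w a + term w b = term w q' := by
          rcases hcase with ⟨h1, h2⟩ | ⟨h1, h2⟩
          · refine ⟨(x, v), (v, y), Sym2.eq_swap, rfl, ?_⟩
            intro w; unfold term; rw [h1, h2]; ring
          · refine ⟨(v, x), (y, v), rfl, Sym2.eq_swap, ?_⟩
            intro w; unfold term; rw [h1, h2]; ring
        refine ⟨a ::ₘ b ::ₘ M2, ?_, ?_⟩
        · rw [Multiset.map_cons, Multiset.map_cons, hM2map, hab_mk1, hab_mk2,
            hMp, Multiset.map_cons, Multiset.map_cons, keyp, keyq]
        · intro w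
          rw [dlt_cons, dlt_cons, ← add_assoc, hab_term w]
          have : dlt M0 w = term w q' + dlt M2 w := by rw [hM0, dlt_cons]
          rw [← this]; exact hbal w
      · -- base case
        refine ⟨M, rfl, ?_⟩
        intro v
        have hF : Multiset.card (M.filter (fun p => p.1 = v ∨ p.2 = v)) ≤ 1 := by
          by_contra h
          push_neg at h
          have h2 : 2 ≤ Multiset.card (M.filter (fun p => p.1 = v ∨ p.2 = v)) := h
          set F := M.filter (fun p => p.1 = v ∨ p.2 = v) with hFdef
          have h0 : 0 < Multiset.card F := by omega
          obtain ⟨p, hp⟩ := Multiset.card_pos_iff_exists_mem.mp h0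
          have hcF : 0 < Multiset.card (F.erase p) := by
            rw [Multiset.card_erase_of_mem hp, Nat.pred_eq_sub_one]; omega
          obtain ⟨q, hq⟩ := Multiset.card_pos_iff_exists_mem.mp hcF
          have hpM : p ∈ M := (Multiset.mem_filter.mp hp).1
          have hpv : p.1 = v ∨ p.2 = v := (Multiset.mem_filter.mp hp).2
          have hqF : q ∈ F := Multiset.mem_of_mem_erase hq
          have hqv : q.1 = v ∨ q.2 = v := (Multiset.mem_filter.mp hqF).2
          have hqMe : q ∈ M.erase p :=
            Multiset.mem_of_le (Multiset.erase_le_erase p (Multiset.filter_le _ M)) hq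
          exact htwo ⟨v, p, q, hpM, hqMe, hpv, hqv⟩
        have hsplit : dlt M v = dlt (M.filter (fun p => p.1 = v ∨ p.2 = v)) v
            + dlt (M.filter (fun p => ¬(p.1 = v ∨ p.2 = v))) v := by
          conv_lhs => rw [← Multiset.filter_add_not (fun p => p.1 = v ∨ p.2 = v) M]
          simp [dlt]
        have hz : dlt (M.filter (fun p => ¬(p.1 = v ∨ p.2 = v))) v = 0 := by
          apply Multiset.sum_eq_zero
          intro z hz
          obtain ⟨p, hp, hpz⟩ := Multiset.mem_map.mp hz
          have hpv := Multiset.of_mem_filter hp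
          push_neg at hpv
          rw [← hpz]; unfold term
          rw [if_neg (fun h => hpv.1 h.symm), if_neg (fun h => hpv.2 h.symm)]; ring
        rw [hsplit, hz, add_zero]
        interval_cases h : Multiset.card (M.filter (fun p => p.1 = v ∨ p.2 = v))
        · rw [Multiset.card_eq_zero.mp h]; simp [dlt]
        · obtain ⟨p, hp⟩ := Multiset.card_eq_one.mp h
          rw [hp]
          simp only [dlt, Multiset.map_singleton, Multiset.sum_singleton]
          exact abs_term_le v p

/-- Transfer an orientation of the outer pairs back to the triples. -/
lemma reconstruct (G : SimpleGraph V) :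
    ∀ (T : Multiset (V × V × V)), (∀ t ∈ T, Valid G t) →
      ∀ M' : Multiset (V × V), M'.map Sym2.mk.uncurry = T.map (fun t => Sym2.mk.uncurry (outer t)) →
      ∃ T' : Multiset (V × V × V), (∀ t ∈ T', Valid G t) ∧
        T'.map outer = M' ∧
        T'.map slot0 + T'.map slot1 = T.map slot0 + T.map slot1 := by
  intro T
  induction T using Multiset.induction with
  | empty =>
    intro _ M' hmap
    simp only [Multiset.map_zero, Multiset.map_eq_zero] at hmap
    exact ⟨0, by simp, by simp [hmap], by simp⟩
  | cons t T ihT =>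
    intro hval M' hmap
    have hmem : Sym2.mk.uncurry (outer t) ∈ M'.map Sym2.mk.uncurry := by
      rw [hmap, Multiset.map_cons]; exact Multiset.mem_cons_self _ _
    obtain ⟨p, hp, hpeq⟩ := Multiset.mem_map.mp hmem
    set M0 := M'.erase p with hM0def
    have hM' : M' = p ::ₘ M0 := (Multiset.cons_erase hp).symm
    have hmap0 : M0.map Sym2.mk.uncurry = T.map (fun t => Sym2.mk.uncurry (outer t)) := by
      rw [hM', Multiset.map_cons, Multiset.map_cons, hpeq] at hmap
      exact (Multiset.cons_inj_right _).mp hmap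
    obtain ⟨T0, hT0val, hT0out, hT0slots⟩ :=
      ihT (fun t ht => hval t (Multiset.mem_cons_of_mem ht)) M0 hmap0
    have hvt : Valid G t := hval t (Multiset.mem_cons_self _ _)
    have hpcase : (p.1 = t.1 ∧ p.2 = t.2.2) ∨ (p.1 = t.2.2 ∧ p.2 = t.1) := by
      have : Sym2.mk.uncurry p = s(t.1, t.2.2) := hpeq
      exact Sym2.eq_iff.mp this
    refine ⟨(p.1, t.2.1, p.2) ::ₘ T0, ?_, ?_, ?_⟩
    · intro t' ht'
      rcases Multiset.mem_cons.mp ht' with h | h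
      · subst h
        rcases hpcase with ⟨h1, h2⟩ | ⟨h1, h2⟩
        · exact ⟨h1 ▸ hvt.1, h2 ▸ hvt.2.1, by rw [h1, h2]; exact hvt.2.2⟩
        · exact ⟨h1 ▸ hvt.2.1.symm, h2 ▸ hvt.1.symm, by rw [h1, h2]; exact hvt.2.2.symm⟩
      · exact hT0val t' h
    · rw [Multiset.map_cons, hT0out]
      have hout : outer (p.1, t.2.1, p.2) = p := rfl
      rw [hout, ← hM']
    · simp only [Multiset.map_cons, Multiset.cons_add, Multiset.add_cons]
      rw [hT0slots]
      rcases hpcase with ⟨h1, h2⟩ | ⟨h1, h2⟩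
      · have e0 : slot0 (p.1, t.2.1, p.2) = slot0 t := by
          show s(p.1, t.2.1) = s(t.1, t.2.1); rw [h1]
        have e1 : slot1 (p.1, t.2.1, p.2) = slot1 t := by
          show s(t.2.1, p.2) = s(t.2.1, t.2.2); rw [h2]
        rw [e0, e1]
      · have e0 : slot0 (p.1, t.2.1, p.2) = slot1 t := by
          show s(p.1, t.2.1) = s(t.2.1, t.2.2); rw [h1, Sym2.eq_swap]
        have e1 : slot1 (p.1, t.2.1, p.2) = slot0 t := by
          show s(t.2.1, p.2) = s(t.1, t.2.1); rw [h2, Sym2.eq_swap]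
        rw [e0, e1]
        exact Multiset.cons_swap _ _ _

lemma exists_noncut (G : SimpleGraph V) (s : Finset V) (hconn : ConnOn G s)
    (h2 : 2 ≤ s.card) : ∃ v ∈ s, ConnOn G (s.erase v) := by
  classical
  obtain ⟨⟨b, hb⟩, hwalk⟩ := hconn
  have hreach : ∀ u, u ∈ s → ∃ n, ∃ w : G.Walk b u, w.length = n ∧
      ∀ x ∈ w.support, x ∈ s := by
    intro u hu
    obtain ⟨w, hw⟩ := hwalk b hb u hu
    exact ⟨w.length, w, rfl, hw⟩
  set d : V → ℕ := fun u => if hu : u ∈ s then Nat.find (hreach u hu) else 0 with hd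
  have dspec : ∀ u (hu : u ∈ s), ∃ w : G.Walk b u, w.length = d u ∧
      ∀ x ∈ w.support, x ∈ s := by
    intro u hu
    have := Nat.find_spec (hreach u hu)
    simpa [hd, dif_pos hu] using this
  have dmin : ∀ u (hu : u ∈ s) (w : G.Walk b u), (∀ x ∈ w.support, x ∈ s) →
      d u ≤ w.length := by
    intro u hu w hw
    have : Nat.find (hreach u hu) ≤ w.length := Nat.find_le ⟨w, rfl, hw⟩
    simpa [hd, dif_pos hu] using this
  obtain ⟨v, hv, hvmax⟩ := Finset.exists_max_image s d ⟨b, hb⟩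
  have hdb : d b = 0 := by
    have := dmin b hb SimpleGraph.Walk.nil (by intro x hx; simp at hx; subst hx; exact hb)
    simpa using this
  have hvb : v ≠ b := by
    obtain ⟨x, hx, hxb⟩ := Finset.exists_mem_ne (s := s) (by omega) b
    have hdx : 1 ≤ d x := by
      by_contra h
      push_neg at h
      obtain ⟨w, hwl, _⟩ := dspec x hx
      have : w.length = 0 := by omega
      exact hxb (SimpleGraph.Walk.eq_of_length_eq_zero this).symm
    intro h
    have := hvmax x hx
    rw [h, hdb] at this
    omega
  -- every u ∈ s, u ≠ v, has a walk from b avoiding v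
  have key : ∀ u, u ∈ s → u ≠ v → ∃ w : G.Walk b u, ∀ x ∈ w.support, x ∈ s.erase v := by
    intro u hu huv
    obtain ⟨w, hwl, hws⟩ := dspec u hu
    refine ⟨w, fun x hx => Finset.mem_erase.mpr ⟨?_, hws x hx⟩⟩
    rintro rfl
    -- v is in the support of a minimal walk to u
    have h1 : d x ≤ (w.takeUntil x hx).length :=
      dmin x hv _ (fun y hy => hws y (SimpleGraph.Walk.support_takeUntil_subset w hx hy))
    have h2 : (w.takeUntil x hx).length + (w.dropUntil x hx).length = w.length := by
      rw [← SimpleGraph.Walk.length_append, SimpleGraph.Walk.take_spec]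
    have h3 : d u ≤ d x := hvmax u hu
    have h4 : (w.dropUntil x hx).length = 0 := by omega
    exact huv (SimpleGraph.Walk.eq_of_length_eq_zero h4).symm
  refine ⟨v, hv, ⟨b, Finset.mem_erase.mpr ⟨(Ne.symm hvb), hb⟩⟩, ?_⟩
  intro a ha c hc
  have haa := Finset.mem_erase.mp ha
  have hcc := Finset.mem_erase.mp hc
  obtain ⟨wa, hwa⟩ := key a haa.2 haa.1
  obtain ⟨wc, hwc⟩ := key c hcc.2 hcc.1
  refine ⟨wa.reverse.append wc, ?_⟩
  intro x hx
  rcases (SimpleGraph.Walk.mem_support_append_iff _ _).mp hx with h | h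
  · exact hwa x (by rwa [SimpleGraph.Walk.support_reverse, List.mem_reverse] at h)
  · exact hwc x h

variable [Fintype V]

def Es (G : SimpleGraph V) (s : Finset V) : Finset (Sym2 V) :=
  G.edgeFinset.filter (fun e => ∀ x ∈ e, x ∈ s)

def Pend (G : SimpleGraph V) (s : Finset V) (e : Sym2 V) : Prop :=
  e ∈ G.edgeFinset ∧ ∃ a b : V, e = s(a, b) ∧ a ∈ s ∧ b ∉ s

lemma pairing (G : SimpleGraph V) :
    ∀ n (s : Finset V), s.card = n → ConnOn G s →
      ∀ P : Finset (Sym2 V), (∀ e ∈ P, Pend G s e) →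
      Even ((Es G s).card + P.card) →
      ∃ T : Multiset (V × V × V), (∀ t ∈ T, Valid G t) ∧
        T.map slot0 + T.map slot1 = (Es G s).val + P.val := by
  intro n
  induction n using Nat.strong_induction_on with
  | _ n ih =>
    intro s hs hconn P hP hev
    by_cases hcard : 2 ≤ s.card
    case neg =>
      obtain ⟨u, hu⟩ : ∃ u, s = {u} := Finset.card_eq_one.mp (by
        have := Finset.card_pos.mpr hconn.1; omega)
      subst hu
      have hEs : Es G {u} = ∅ := by
        apply Finset.eq_empty_iff_forall_notMem.mpr
        intro e he
        rw [Es, Finset.mem_filter] at he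
        obtain ⟨x, y, hxy⟩ := sym2_ex e
        have hx : x ∈ ({u} : Finset V) := he.2 x (by rw [hxy]; exact Sym2.mem_mk_left x y)
        have hy : y ∈ ({u} : Finset V) := he.2 y (by rw [hxy]; exact Sym2.mem_mk_right x y)
        rw [Finset.mem_singleton] at hx hy
        have hadj : G.Adj x y := by
          have := he.1; rw [SimpleGraph.mem_edgeFinset, hxy] at this; exact this
        exact G.irrefl (by rwa [hx, hy] at hadj)
      have hPmem : ∀ e ∈ P.val, e ∈ G.edgeSet ∧ u ∈ e := by
        intro e he
        rw [Finset.mem_val] at he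
        obtain ⟨hedge, a, b, heq, ha, hb⟩ := hP e he
        rw [Finset.mem_singleton] at ha
        refine ⟨SimpleGraph.mem_edgeFinset.mp hedge, ?_⟩
        rw [heq, ← ha]; exact Sym2.mem_mk_left a b
      have hev' : Even P.card := by rwa [hEs, Finset.card_empty, zero_add] at hev
      obtain ⟨T, hTval, hTeq⟩ := pair_at_vertex G u P.card P.val rfl P.nodup hev' hPmem
      exact ⟨T, hTval, by rw [hTeq, hEs]; simp⟩
    case pos =>
      obtain ⟨v, hv, hconn'⟩ := exists_noncut G s hconn hcard
      set s' := s.erase v with hs'def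
      set Ev := (Es G s).filter (fun e => v ∈ e) with hEvdef
      set Pv := P.filter (fun e => v ∈ e) with hPvdef
      set P1 := P.filter (fun e => v ∉ e) with hP1def
      have hs'card : s'.card = n - 1 := by
        rw [hs'def, Finset.card_erase_of_mem hv, hs]
      have hn2 : 2 ≤ n := hs ▸ hcard
      have hEs' : Es G s' = (Es G s).filter (fun e => v ∉ e) := by
        ext e
        simp only [Es, Finset.mem_filter, hs'def, Finset.mem_erase]
        constructor
        · rintro ⟨he, hall⟩
          refine ⟨⟨he, fun x hx => (hall x hx).2⟩, fun hve => (hall v hve).1 rfl⟩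
        · rintro ⟨⟨he, hall⟩, hve⟩
          exact ⟨he, fun x hx => ⟨fun h => hve (h ▸ hx), hall x hx⟩⟩
      have hEsplit : (Es G s).val = Ev.val + (Es G s').val := by
        rw [hEs', hEvdef]
        simp only [Finset.filter_val]
        exact (Multiset.filter_add_not _ _).symm
      have hPsplit : P.val = Pv.val + P1.val := by
        rw [hPvdef, hP1def]
        simp only [Finset.filter_val]
        exact (Multiset.filter_add_not _ _).symm
      have hEcard : (Es G s).card = Ev.card + (Es G s').card := by
        rw [Finset.card_def, Finset.card_def, Finset.card_def, hEsplit, Multiset.card_add]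
      have hPcard : P.card = Pv.card + P1.card := by
        rw [Finset.card_def, Finset.card_def, Finset.card_def, hPsplit, Multiset.card_add]
      have hP1pend : ∀ e ∈ P1, Pend G s' e := by
        intro e he
        rw [hP1def, Finset.mem_filter] at he
        obtain ⟨hedge, a, b, heq, ha, hb⟩ := hP e he.1
        have hav : a ≠ v := by
          intro h; apply he.2; rw [heq, ← h]; exact Sym2.mem_mk_left a b
        exact ⟨hedge, a, b, heq, Finset.mem_erase.mpr ⟨hav, ha⟩,
          fun h => hb (Finset.mem_of_mem_erase h)⟩
      have hQmem : ∀ e ∈ Ev.val + Pv.val, e ∈ G.edgeSet ∧ v ∈ e := by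
        intro e he
        rcases Multiset.mem_add.mp he with h | h
        · rw [Finset.mem_val, hEvdef, Finset.mem_filter, Es, Finset.mem_filter] at h
          exact ⟨SimpleGraph.mem_edgeFinset.mp h.1.1, h.2⟩
        · rw [Finset.mem_val, hPvdef, Finset.mem_filter] at h
          exact ⟨SimpleGraph.mem_edgeFinset.mp (hP e h.1).1, h.2⟩
      have hdisj : Disjoint Ev.val Pv.val := by
        rw [Multiset.disjoint_left]
        intro e he1 he2
        rw [Finset.mem_val, hEvdef, Finset.mem_filter, Es, Finset.mem_filter] at he1
        rw [Finset.mem_val, hPvdef, Finset.mem_filter] at he2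
        obtain ⟨hedge, a, b, heq, ha, hb⟩ := hP e he2.1
        exact hb (he1.1.2 b (by rw [heq]; exact Sym2.mem_mk_right a b))
      by_cases hk : Even (Ev.card + Pv.card)
      case pos =>
        have hQnodup : (Ev.val + Pv.val).Nodup :=
          Multiset.nodup_add.mpr ⟨Ev.nodup, Pv.nodup, hdisj⟩
        have hQcard : Multiset.card (Ev.val + Pv.val) = Ev.card + Pv.card := by
          rw [Multiset.card_add, Finset.card_def, Finset.card_def]
        obtain ⟨T1, hT1val, hT1eq⟩ := pair_at_vertex G v _ (Ev.val + Pv.val) rfl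
          hQnodup (hQcard ▸ hk) hQmem
        have hev2 : Even ((Es G s').card + P1.card) := by
          rcases hev with ⟨m, hm⟩; rcases hk with ⟨l, hl⟩
          exact ⟨m - l, by omega⟩
        obtain ⟨T2, hT2val, hT2eq⟩ := ih (n-1) (by omega) s' hs'card hconn' P1 hP1pend hev2
        refine ⟨T1 + T2, ?_, ?_⟩
        · intro t ht
          rcases Multiset.mem_add.mp ht with h | h
          exacts [hT1val t h, hT2val t h]
        · rw [Multiset.map_add, Multiset.map_add, add_add_add_comm, hT1eq, hT2eq,
            hEsplit, hPsplit]
          exact add_add_add_comm _ _ _ _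
      case neg =>
        -- find an edge of Es at v
        obtain ⟨x, hx, hxv⟩ := Finset.exists_mem_ne (s := s) (by omega) v
        obtain ⟨w, hwsupp⟩ := hconn.2 v hv x hx
        obtain ⟨u', hadj, hu's⟩ : ∃ u', G.Adj v u' ∧ u' ∈ s := by
          cases w with
          | nil => exact absurd rfl hxv.symm
          | cons h p =>
            refine ⟨_, h, hwsupp _ ?_⟩
            rw [SimpleGraph.Walk.support_cons]
            exact List.mem_cons_of_mem _ p.start_mem_support
        set estar := s(v, u') with hestar
        have hestarEv : estar ∈ Ev := by
          rw [hEvdef, Finset.mem_filter, Es, Finset.mem_filter]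
          refine ⟨⟨SimpleGraph.mem_edgeFinset.mpr hadj, ?_⟩, Sym2.mem_mk_left v u'⟩
          intro y hy
          rcases Sym2.mem_iff.mp hy with h | h
          · exact h ▸ hv
          · exact h ▸ hu's
        have hQnodup : ((Ev.erase estar).val + Pv.val).Nodup :=
          Multiset.nodup_add.mpr ⟨(Ev.erase estar).nodup, Pv.nodup,
            Multiset.disjoint_left.mpr fun he1 he2 =>
              Multiset.disjoint_left.mp hdisj (Finset.mem_val.mpr
                (Finset.mem_of_mem_erase (Finset.mem_val.mp he1))) he2⟩
        have hk1 : 1 ≤ Ev.card := Finset.card_pos.mpr ⟨estar, hestarEv⟩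
        have hQcard : Multiset.card ((Ev.erase estar).val + Pv.val)
            = Ev.card + Pv.card - 1 := by
          rw [Multiset.card_add, ← Finset.card_def, ← Finset.card_def,
            Finset.card_erase_of_mem hestarEv]
          omega
        have hkodd : Even (Ev.card + Pv.card - 1) := by
          rcases Nat.not_even_iff_odd.mp hk with ⟨l, hl⟩
          exact ⟨l, by omega⟩
        have hQmem' : ∀ e ∈ (Ev.erase estar).val + Pv.val, e ∈ G.edgeSet ∧ v ∈ e := by
          intro e he
          apply hQmem
          rcases Multiset.mem_add.mp he with h | h
          · exact Multiset.mem_add.mpr (Or.inl (Finset.mem_val.mpr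
              (Finset.mem_of_mem_erase (Finset.mem_val.mp h))))
          · exact Multiset.mem_add.mpr (Or.inr h)
        obtain ⟨T1, hT1val, hT1eq⟩ := pair_at_vertex G v _ _ rfl hQnodup
          (hQcard ▸ hkodd) hQmem'
        -- recursion with pendant estar
        have hestarP1 : estar ∉ P1 := by
          intro h
          rw [hP1def, Finset.mem_filter] at h
          obtain ⟨hedge, a, b, heq, ha, hb⟩ := hP estar h.1
          have : b ∈ estar := by rw [heq]; exact Sym2.mem_mk_right a b
          rcases Sym2.mem_iff.mp this with hh | hh
          · exact hb (hh ▸ hv)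
          · exact hb (hh ▸ hu's)
        set P' := insert estar P1 with hP'def
        have hP'pend : ∀ e ∈ P', Pend G s' e := by
          intro e he
          rcases Finset.mem_insert.mp he with h | h
          · subst h
            refine ⟨SimpleGraph.mem_edgeFinset.mpr hadj, u', v, ?_, ?_, ?_⟩
            · rw [hestar, Sym2.eq_swap]
            · exact Finset.mem_erase.mpr ⟨hadj.ne', hu's⟩
            · exact Finset.notMem_erase v s
          · exact hP1pend e h
        have hP'card : P'.card = P1.card + 1 := Finset.card_insert_of_notMem hestarP1
        have hev2 : Even ((Es G s').card + P'.card) := by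
          rcases hev with ⟨m, hm⟩
          rcases Nat.not_even_iff_odd.mp hk with ⟨l, hl⟩
          refine ⟨m - l, by omega⟩
        obtain ⟨T2, hT2val, hT2eq⟩ := ih (n-1) (by omega) s' hs'card hconn' P' hP'pend hev2
        refine ⟨T1 + T2, ?_, ?_⟩
        · intro t ht
          rcases Multiset.mem_add.mp ht with h | h
          exacts [hT1val t h, hT2val t h]
        · rw [Multiset.map_add, Multiset.map_add, add_add_add_comm, hT1eq, hT2eq,
            hEsplit, hPsplit]
          have hEvval : Ev.val = {estar} + (Ev.erase estar).val := by
            rw [Multiset.singleton_add, Finset.erase_val,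
              Multiset.cons_erase (Finset.mem_val.mpr hestarEv)]
          have hP'val : P'.val = {estar} + P1.val := by
            rw [Multiset.singleton_add, hP'def, Finset.insert_val_of_notMem hestarP1]
          rw [hEvval, hP'val]
          abel

lemma card_filter_int {α : Type*} (p : α → Prop) [DecidablePred p] (M : Multiset α) :
    ((Multiset.card (M.filter p) : ℤ)) = (M.map fun x => if p x then (1:ℤ) else 0).sum := by
  induction M using Multiset.induction with
  | empty => simp
  | cons a M ih =>
    by_cases h : p a
    · rw [Multiset.filter_cons_of_pos _ h, Multiset.card_cons, Multiset.map_cons,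
        Multiset.sum_cons, if_pos h, ← ih]
      push_cast; ring
    · rw [Multiset.filter_cons_of_neg _ h, Multiset.map_cons,
        Multiset.sum_cons, if_neg h, ← ih]
      ring

lemma sum_dlt [Fintype V] (M : Multiset (V × V)) : ∑ v : V, dlt M v = 0 := by
  induction M using Multiset.induction with
  | empty => simp [dlt]
  | cons p M ih =>
    rw [Finset.sum_congr rfl (fun v _ => dlt_cons p M v), Finset.sum_add_distrib, ih,
      add_zero]
    simp [term, Finset.sum_sub_distrib]

lemma term_eq {V : Type*} {G : SimpleGraph V} (v : V) (t : V × V × V) (h : Valid G t) :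
    (if v ∈ slot0 t then (1:ℤ) else 0) - (if v ∈ slot1 t then 1 else 0)
      = term v (outer t) := by
  obtain ⟨h1, h2, h3⟩ := h
  have hac : t.1 ≠ t.2.1 := h1.ne
  have hcb : t.2.1 ≠ t.2.2 := h2.ne
  simp only [slot0, slot1, Sym2.mem_iff, term, outer]
  by_cases e1 : v = t.1 <;> by_cases e2 : v = t.2.1 <;> by_cases e3 : v = t.2.2 <;>
    simp_all


end SEB

open SEB in

/-- Every simple connected graph of even size admits an
edge-friendly labeling that is strongly edge-balanced:
`e_f(0) = e_f(1)` and `v_f(0) = v_f(1)`. -/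
theorem connected_even_size_strongly_edge_balanced
    {V : Type*} [Fintype V] (G : SimpleGraph V)
    (hconn : G.Connected) (hsize : Even G.edgeFinset.card) :
    ∃ f : Sym2 V → Fin 2, EdgeFriendly G f ∧
      edgeCount G f 0 = edgeCount G f 1 ∧
      vertexCount G f 0 = vertexCount G f 1 := by
  classical
  have hne : Nonempty V := hconn.nonempty
  have hconnOn : ConnOn G Finset.univ := by
    refine ⟨Finset.univ_nonempty, ?_⟩
    intro a _ b _
    obtain ⟨w⟩ := hconn.preconnected a b
    exact ⟨w, fun x _ => Finset.mem_univ x⟩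
  have hEsuniv : Es G Finset.univ = G.edgeFinset := by
    rw [Es]
    apply Finset.filter_true_of_mem
    intro e _ x _
    exact Finset.mem_univ x
  obtain ⟨T, hTval, hTeq⟩ := pairing G Finset.univ.card Finset.univ rfl hconnOn ∅
    (by simp) (by simpa [hEsuniv] using hsize)
  rw [hEsuniv] at hTeq
  simp only [Finset.empty_val, add_zero] at hTeq
  obtain ⟨M', hM'map, hM'bal⟩ := orient (Multiset.card (T.map outer)) (T.map outer) rfl
  have hmapmk : M'.map Sym2.mk.uncurry = T.map (fun t => Sym2.mk.uncurry (outer t)) := by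
    rw [hM'map, Multiset.map_map]; rfl
  obtain ⟨T', hT'val, hT'out, hT'slots⟩ := reconstruct G T hTval M' hmapmk
  rw [hTeq] at hT'slots
  set Z := T'.map slot0 with hZdef
  set O := T'.map slot1 with hOdef
  have hval : G.edgeFinset.val = Z + O := hT'slots.symm
  have hnodup : (Z + O).Nodup := hT'slots ▸ G.edgeFinset.nodup
  obtain ⟨hZnd, hOnd, hZO⟩ := Multiset.nodup_add.mp hnodup
  set f : Sym2 V → Fin 2 := fun e => if e ∈ Z then 0 else 1 with hfdef
  have hfZ : ∀ e ∈ Z, f e = 0 := fun e he => if_pos he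
  have hfO : ∀ e ∈ O, f e = 1 :=
    fun e he => if_neg (fun h => Multiset.disjoint_left.mp hZO h he)
  -- edge counts
  have he0 : edgeCount G f 0 = Multiset.card Z := by
    rw [edgeCount, Finset.card_def, Finset.filter_val, hval, Multiset.filter_add,
      Multiset.filter_eq_self.mpr hfZ,
      Multiset.filter_eq_nil.mpr (fun e he => by rw [hfO e he]; decide), add_zero]
  have he1 : edgeCount G f 1 = Multiset.card O := by
    rw [edgeCount, Finset.card_def, Finset.filter_val, hval, Multiset.filter_add,
      Multiset.filter_eq_nil.mpr (fun e he => by rw [hfZ e he]; decide),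
      Multiset.filter_eq_self.mpr hfO, zero_add]
  have hZcard : Multiset.card Z = Multiset.card T' := Multiset.card_map _ _
  have hOcard : Multiset.card O = Multiset.card T' := Multiset.card_map _ _
  have hee : edgeCount G f 0 = edgeCount G f 1 := by rw [he0, he1, hZcard, hOcard]
  -- neighbour counts
  have hbij : ∀ (i : Fin 2) (v : V), (nbr G f i v).card
      = (G.edgeFinset.filter (fun e => v ∈ e ∧ f e = i)).card := by
    intro i v
    apply Finset.card_bij (fun u _ => s(v, u))
    · intro u hu
      rw [nbr, Finset.mem_filter] at hu
      rw [Finset.mem_filter]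
      exact ⟨SimpleGraph.mem_edgeFinset.mpr hu.2.1, Sym2.mem_mk_left v u, hu.2.2⟩
    · intro u1 _ u2 _ h
      exact Sym2.congr_right.mp h
    · intro e he
      rw [Finset.mem_filter] at he
      obtain ⟨u, hu⟩ := Sym2.mem_iff_exists.mp he.2.1
      refine ⟨u, ?_, hu.symm⟩
      rw [nbr, Finset.mem_filter]
      have hadj : G.Adj v u := by
        rw [← SimpleGraph.mem_edgeSet, ← hu]
        exact SimpleGraph.mem_edgeFinset.mp he.1
      exact ⟨Finset.mem_univ u, hadj, by rw [← hu]; exact he.2.2⟩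
  have hn0 : ∀ v : V, (nbr G f 0 v).card
      = Multiset.card (T'.filter ((fun e => v ∈ e) ∘ slot0)) := by
    intro v
    have hZf : Multiset.filter (fun e => v ∈ e ∧ f e = 0) Z
        = Multiset.filter (fun e => v ∈ e) Z :=
      Multiset.filter_congr (fun e he => by simp [hfZ e he])
    have hOf : Multiset.filter (fun e => v ∈ e ∧ f e = 0) O = 0 :=
      Multiset.filter_eq_nil.mpr (fun e he hh => by
        have := hfO e he; rw [this] at hh; exact absurd hh.2 (by decide))
    rw [hbij 0 v, Finset.card_def, Finset.filter_val, hval, Multiset.filter_add,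
      hZf, hOf, add_zero, hZdef, Multiset.filter_map, Multiset.card_map]
  have hn1 : ∀ v : V, (nbr G f 1 v).card
      = Multiset.card (T'.filter ((fun e => v ∈ e) ∘ slot1)) := by
    intro v
    have hOf : Multiset.filter (fun e => v ∈ e ∧ f e = 1) O
        = Multiset.filter (fun e => v ∈ e) O :=
      Multiset.filter_congr (fun e he => by simp [hfO e he])
    have hZf : Multiset.filter (fun e => v ∈ e ∧ f e = 1) Z = 0 :=
      Multiset.filter_eq_nil.mpr (fun e he hh => by
        have := hfZ e he; rw [this] at hh; exact absurd hh.2 (by decide))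
    rw [hbij 1 v, Finset.card_def, Finset.filter_val, hval, Multiset.filter_add,
      hZf, hOf, zero_add, hOdef, Multiset.filter_map, Multiset.card_map]
  -- the vertex imbalance
  set D : V → ℤ := fun v => ((nbr G f 0 v).card : ℤ) - ((nbr G f 1 v).card : ℤ) with hDdef
  have hD : ∀ v, D v = dlt M' v := by
    intro v
    have hDv : D v = ((nbr G f 0 v).card : ℤ) - ((nbr G f 1 v).card : ℤ) := rfl
    rw [hDv, hn0 v, hn1 v, card_filter_int _ T', card_filter_int _ T']
    simp only [Function.comp_apply]
    rw [← Multiset.sum_map_sub]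
    rw [Multiset.map_congr rfl (fun t ht => term_eq v t (hT'val t ht))]
    have hmm : (T'.map fun t => term v (outer t)) = M'.map (term v) := by
      rw [← hT'out, Multiset.map_map]
      rfl
    rw [hmm]
    rfl
  have hD1 : ∀ v, |D v| ≤ 1 := fun v => (hD v) ▸ hM'bal v
  have hDsum : ∑ v : V, D v = 0 := by
    rw [Finset.sum_congr rfl (fun v _ => hD v)]
    exact sum_dlt M'
  -- vertex labels vs D
  have hlab0 : ∀ v, (vertexLabel G f v = some 0) ↔ D v = 1 := by
    intro v
    have h := hD1 v
    rw [abs_le] at h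
    have hD' : D v = ((nbr G f 0 v).card : ℤ) - ((nbr G f 1 v).card : ℤ) := rfl
    rw [vertexLabel]
    by_cases hc : (nbr G f 1 v).card < (nbr G f 0 v).card
    · rw [if_pos hc]
      exact ⟨fun _ => by omega, fun _ => rfl⟩
    · rw [if_neg hc]
      by_cases hc2 : (nbr G f 0 v).card < (nbr G f 1 v).card
      · rw [if_pos hc2]
        exact ⟨fun hh => absurd (Option.some.inj hh) (by decide), fun hh => by omega⟩
      · rw [if_neg hc2]
        exact ⟨fun hh => absurd hh (by simp), fun hh => by omega⟩
  have hlab1 : ∀ v, (vertexLabel G f v = some 1) ↔ D v = -1 := by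
    intro v
    have h := hD1 v
    rw [abs_le] at h
    have hD' : D v = ((nbr G f 0 v).card : ℤ) - ((nbr G f 1 v).card : ℤ) := rfl
    rw [vertexLabel]
    by_cases hc : (nbr G f 1 v).card < (nbr G f 0 v).card
    · rw [if_pos hc]
      exact ⟨fun hh => absurd (Option.some.inj hh) (by decide), fun hh => by omega⟩
    · rw [if_neg hc]
      by_cases hc2 : (nbr G f 0 v).card < (nbr G f 1 v).card
      · rw [if_pos hc2]
        exact ⟨fun _ => by omega, fun _ => rfl⟩
      · rw [if_neg hc2]
        exact ⟨fun hh => absurd hh (by simp), fun hh => by omega⟩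
  -- counting
  have hsplit : ∑ v : V, D v
      = ∑ v : V, ((if D v = 1 then (1:ℤ) else 0) - (if D v = -1 then 1 else 0)) := by
    apply Finset.sum_congr rfl
    intro v _
    have h := hD1 v
    rw [abs_le] at h
    by_cases h1 : D v = 1
    · simp [h1]
    · by_cases h2 : D v = -1
      · simp [h2]
      · have h0 : D v = 0 := by omega
        simp [h0]
  rw [hsplit, Finset.sum_sub_distrib, Finset.sum_boole, Finset.sum_boole] at hDsum
  have hcards : (Finset.univ.filter (fun v => D v = 1)).card
      = (Finset.univ.filter (fun v => D v = -1)).card := by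
    have := hDsum
    omega
  have hvv : vertexCount G f 0 = vertexCount G f 1 := by
    rw [vertexCount, vertexCount,
      Finset.filter_congr (fun v _ => hlab0 v),
      Finset.filter_congr (fun v _ => hlab1 v), hcards]
  exact ⟨f, by rw [EdgeFriendly, hee]; simp, hee, hvv⟩
end
end

section
/- If G is a simple connected graph of even size (i.e., with an even number of edges), then there exists an edge-friendly binary edge labeling f of G with e_f(0) = e_f(1) and |v_f(0) − v_f(1)| ≤ 1 such that every vertex of even degree is unlabeled under the induced partial vertex labeling f⁺. -/
/-!
Edge-friendly labelings (Krop, Lee, Raridan).  A binary edge labeling of a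
graph `G` is `f : Sym2 V → Fin 2` (only its values on edges matter).  For
`i : Fin 2`, `nbr G f i v` is the set `N_i(v)` of neighbors of `v` joined to
`v` by an `i`-edge, `edgeCount G f i` is `e_f(i)`, and `vertexLabel G f v` is
the induced partial vertex label `f⁺(v)` (with `none` meaning unlabeled).
-/

open Finset

attribute [local instance] Classical.propDecidable

noncomputable section

namespace EulerAux

open SimpleGraph

variable {W : Type*} [Fintype W]

lemma countP_eq_card_used (H : SimpleGraph W) {y z : W} (p : H.Walk y z) (hp : p.IsTrail)
    (v : W) :
    p.edges.countP (fun e => v ∈ e) =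
      ((H.neighborFinset v).filter (fun w => s(v, w) ∈ p.edges)).card := by
  classical
  rw [List.countP_eq_length_filter,
    ← List.toFinset_card_of_nodup (hp.edges_nodup.filter _)]
  apply Finset.card_nbij' (fun e => if h : v ∈ e then Sym2.Mem.other h else v)
      (fun w => s(v, w))
  · intro e he
    simp only [Finset.mem_coe, List.mem_toFinset, List.mem_filter, decide_eq_true_eq] at he
    obtain ⟨hel, hev⟩ := he
    dsimp only
    rw [dif_pos hev]
    have hspec := Sym2.other_spec hev
    have hadj : H.Adj v (Sym2.Mem.other hev) := by
      rw [← SimpleGraph.mem_edgeSet, hspec]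
      exact p.edges_subset_edgeSet hel
    simp only [Finset.mem_coe, Finset.mem_filter, SimpleGraph.mem_neighborFinset]
    exact ⟨hadj, by rw [hspec]; exact hel⟩
  · intro w hw
    simp only [Finset.mem_coe, Finset.mem_filter, SimpleGraph.mem_neighborFinset] at hw
    simp only [Finset.mem_coe, List.mem_toFinset, List.mem_filter, decide_eq_true_eq]
    exact ⟨hw.2, Sym2.mem_mk_left _ _⟩
  · intro e he
    simp only [Finset.mem_coe, List.mem_toFinset, List.mem_filter, decide_eq_true_eq] at he
    dsimp only
    rw [dif_pos he.2]
    exact Sym2.other_spec he.2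
  · intro w hw
    have hv : v ∈ s(v, w) := Sym2.mem_mk_left _ _
    dsimp only
    rw [dif_pos hv]
    simp only [Finset.mem_coe, Finset.mem_filter, SimpleGraph.mem_neighborFinset] at hw
    have := Sym2.other_spec hv
    rw [Sym2.congr_right] at this
    exact this


/-- The non-closed end of a trail in an even graph has an unused incident edge. -/
lemma trail_end_unused (H : SimpleGraph W) (hdeg : ∀ v : W, Even (H.degree v))
    {y z : W} (p : H.Walk y z) (hp : p.IsTrail) (hyz : z ≠ y) :
    ∃ w, H.Adj z w ∧ s(z, w) ∉ p.edges := by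
  classical
  have hodd : ¬ Even (p.edges.countP (fun e => z ∈ e)) := by
    rw [hp.even_countP_edges_iff z]
    push_neg
    exact ⟨Ne.symm hyz, fun _ => rfl⟩
  have hle : ((H.neighborFinset z).filter (fun w => s(z, w) ∈ p.edges)).card
      ≤ H.degree z := by
    rw [← SimpleGraph.card_neighborFinset_eq_degree]
    exact Finset.card_le_card (Finset.filter_subset _ _)
  have hlt : ((H.neighborFinset z).filter (fun w => s(z, w) ∈ p.edges)).card
      < H.degree z := by
    rcases lt_or_eq_of_le hle with h | h
    · exact h
    · exfalso
      rw [← countP_eq_card_used H p hp z] at h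
      rw [h] at hodd
      exact hodd (hdeg z)
  by_contra hcon
  push_neg at hcon
  have : (H.neighborFinset z).filter (fun w => s(z, w) ∈ p.edges)
      = H.neighborFinset z := by
    apply Finset.filter_true_of_mem
    intro w hw
    exact hcon w (by rwa [SimpleGraph.mem_neighborFinset] at hw)
  rw [this, SimpleGraph.card_neighborFinset_eq_degree] at hlt
  omega

/-- In a graph with even degrees, a nontrivial trail can be extended to a closed trail. -/
lemma exists_closed_trail (H : SimpleGraph W) (hdeg : ∀ v : W, Even (H.degree v)) :
    ∀ (k : ℕ) {y z : W} (p : H.Walk y z), p.IsTrail → 0 < p.length →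
      H.edgeFinset.card ≤ p.length + k →
      ∃ q : H.Walk y y, q.IsTrail ∧ 0 < q.length := by
  classical
  intro k
  induction k with
  | zero =>
    intro y z p hp hlen hcard
    by_cases hyz : z = y
    · subst hyz; exact ⟨p, hp, hlen⟩
    · exfalso
      obtain ⟨w, hw, hwe⟩ := trail_end_unused H hdeg p hp hyz
      have hsub : insert s(z, w) p.edges.toFinset ⊆ H.edgeFinset := by
        intro e he
        rw [Finset.mem_insert] at he
        rw [SimpleGraph.mem_edgeFinset]
        rcases he with rfl | he
        · exact hw
        · exact p.edges_subset_edgeSet (List.mem_toFinset.mp he)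
      have hcardins : (insert s(z, w) p.edges.toFinset).card = p.length + 1 := by
        rw [Finset.card_insert_of_notMem (by simpa using hwe),
          List.toFinset_card_of_nodup hp.edges_nodup, p.length_edges]
      have := Finset.card_le_card hsub
      rw [hcardins] at this
      omega
  | succ k ih =>
    intro y z p hp hlen hcard
    by_cases hyz : z = y
    · subst hyz; exact ⟨p, hp, hlen⟩
    · obtain ⟨w, hw, hwe⟩ := trail_end_unused H hdeg p hp hyz
      refine ih (p.concat hw) ⟨?_⟩ ?_ ?_
      · rw [Walk.edges_concat, List.concat_eq_append, List.nodup_append]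
        exact ⟨hp.edges_nodup, List.nodup_singleton _,
          by intro e he h1 hh heq; rw [List.mem_singleton] at hh; subst hh; subst heq; exact hwe he⟩
      · rw [Walk.length_concat]; omega
      · rw [Walk.length_concat]; omega

section Euler

lemma reach_unused (H : SimpleGraph W) {x : W} (p : H.Walk x x) :
    ∀ {a c : W} (_ : H.Walk a c), c ∈ p.support →
      (∃ b, H.Adj a b ∧ s(a, b) ∉ p.edges) →
      ∃ y ∈ p.support, ∃ w, H.Adj y w ∧ s(y, w) ∉ p.edges := by
  intro a c r
  induction r with
  | nil => exact fun hc h => ⟨_, hc, h⟩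
  | @cons u v x' h r ih =>
    intro hc ⟨b, hab, hnb⟩
    by_cases hs : u ∈ p.support
    · exact ⟨u, hs, b, hab, hnb⟩
    · apply ih hc
      refine ⟨u, h.symm, ?_⟩
      rw [Sym2.eq_swap]
      intro hmem
      exact hs (p.fst_mem_support_of_mem_edges hmem)

lemma deleteEdges_even_degree (H : SimpleGraph W) (hdeg : ∀ v : W, Even (H.degree v))
    {x : W} (p : H.Walk x x) (hp : p.IsTrail) (v : W) :
    Even ((H.deleteEdges {e | e ∈ p.edges}).degree v) := by
  classical
  have hnb : (H.deleteEdges {e | e ∈ p.edges}).neighborFinset v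
      = (H.neighborFinset v).filter (fun w => s(v, w) ∉ p.edges) := by
    ext w
    simp [SimpleGraph.mem_neighborFinset, SimpleGraph.deleteEdges_adj]
  have hsplit := Finset.card_filter_add_card_filter_not
    (s := H.neighborFinset v) (p := fun w => s(v, w) ∈ p.edges)
  have hused : ((H.neighborFinset v).filter (fun w => s(v, w) ∈ p.edges)).card
      = p.edges.countP (fun e => v ∈ e) := (countP_eq_card_used H p hp v).symm
  have heven : Even (p.edges.countP (fun e => v ∈ e)) := by
    rw [hp.even_countP_edges_iff v]
    intro h
    exact absurd rfl h
  rw [← SimpleGraph.card_neighborFinset_eq_degree, hnb]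
  have hdv := hdeg v
  rw [← SimpleGraph.card_neighborFinset_eq_degree] at hdv
  have : ((H.neighborFinset v).filter (fun w => ¬ s(v, w) ∈ p.edges)).card =
      (H.neighborFinset v).card - p.edges.countP (fun e => v ∈ e) := by
    omega
  rw [this]
  rw [Nat.even_sub (by omega)]
  constructor
  · intro _; exact heven
  · intro _; exact hdv

lemma euler_aux (H : SimpleGraph W) (hconn : H.Connected) (hdeg : ∀ v : W, Even (H.degree v)) :
    ∀ (k : ℕ) (x : W) (p : H.Walk x x), p.IsTrail →
      H.edgeFinset.card ≤ p.length + k →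
      ∃ (y : W) (q : H.Walk y y), q.IsEulerian := by
  classical
  intro k
  induction k with
  | zero =>
    intro x p hp hcard
    refine ⟨x, p, hp.isEulerian_of_forall_mem ?_⟩
    -- all edges must be used
    intro e he
    by_contra hne
    have hsub : insert e p.edges.toFinset ⊆ H.edgeFinset := by
      intro e' he'
      rw [Finset.mem_insert] at he'
      rw [SimpleGraph.mem_edgeFinset]
      rcases he' with rfl | he'
      · exact he
      · exact p.edges_subset_edgeSet (List.mem_toFinset.mp he')
    have := Finset.card_le_card hsub
    rw [Finset.card_insert_of_notMem (by simpa using hne),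
      List.toFinset_card_of_nodup hp.edges_nodup, p.length_edges] at this
    omega
  | succ k ih =>
    intro x p hp hcard
    by_cases hall : ∀ e ∈ H.edgeSet, e ∈ p.edges
    · exact ⟨x, p, hp.isEulerian_of_forall_mem hall⟩
    · push_neg at hall
      obtain ⟨e, he, hne⟩ := hall
      -- get an unused edge incident to a support vertex
      have hex : ∃ y ∈ p.support, ∃ w, H.Adj y w ∧ s(y, w) ∉ p.edges := by
        induction e using Sym2.ind with
        | _ a b =>
          have hadj : H.Adj a b := (SimpleGraph.mem_edgeSet H).mp he
          exact reach_unused H p ((hconn a x).some) p.start_mem_support ⟨b, hadj, hne⟩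
      obtain ⟨y, hy, w, hw, hwe⟩ := hex
      set H' := H.deleteEdges {e | e ∈ p.edges} with hH'
      have hadj' : H'.Adj y w := by
        rw [hH', SimpleGraph.deleteEdges_adj]
        exact ⟨hw, hwe⟩
      have hq : ∃ q : H'.Walk y y, q.IsTrail ∧ 0 < q.length := by
        apply exists_closed_trail H' (fun v => by convert deleteEdges_even_degree H hdeg p hp v)
          H'.edgeFinset.card (Walk.cons hadj' Walk.nil) ?_ (by simp) (by simp; convert Nat.le_add_left _ 1)
        constructor
        simp [List.nodup_singleton]
      obtain ⟨q', hq't, hq'len⟩ := hq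
      have hq'sub : ∀ e' ∈ q'.edges, e' ∈ H.edgeSet := by
        intro e' he'
        have := q'.edges_subset_edgeSet he'
        rw [hH', SimpleGraph.edgeSet_deleteEdges] at this
        exact this.1
      have hq'unused : ∀ e' ∈ q'.edges, e' ∉ p.edges := by
        intro e' he'
        have := q'.edges_subset_edgeSet he'
        rw [hH', SimpleGraph.edgeSet_deleteEdges] at this
        exact this.2
      set q : H.Walk y y := q'.transfer H hq'sub with hqdef
      have hqe : q.edges = q'.edges := q'.edges_transfer hq'sub
      set P : H.Walk y y := (p.rotate y hy).append q with hPdef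
      have hProt : (p.rotate y hy).edges ~r p.edges := p.rotate_edges y hy
      have hPtrail : P.IsTrail := by
        rw [SimpleGraph.Walk.isTrail_def, hPdef, Walk.edges_append, List.nodup_append]
        refine ⟨(hp.rotate hy).edges_nodup, ?_, ?_⟩
        · rw [SimpleGraph.Walk.isTrail_def] at hq't
          rw [hqe]; exact hq't
        · intro e' he1 b he2 heq; subst heq
          rw [hqe] at he2
          exact hq'unused e' he2 (hProt.perm.mem_iff.mp he1)
      have hPlen : P.length = p.length + q'.length := by
        rw [hPdef, Walk.length_append]
        congr 1
        · calc (p.rotate y hy).length = (p.rotate y hy).edges.length :=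
              ((p.rotate y hy).length_edges).symm
            _ = p.edges.length := hProt.perm.length_eq
            _ = p.length := p.length_edges
        · rw [hqdef]; exact q'.length_transfer hq'sub
      apply ih y P hPtrail
      omega

lemma euler_exists (H : SimpleGraph W) (hconn : H.Connected) (hdeg : ∀ v : W, Even (H.degree v)) :
    ∃ (y : W) (q : H.Walk y y), q.IsEulerian := by
  classical
  obtain ⟨x⟩ := hconn.nonempty
  exact euler_aux H hconn hdeg H.edgeFinset.card x Walk.nil ⟨List.nodup_nil⟩ (by simp)

end Euler

section Labeling

variable {W : Type*} [Fintype W]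

open SimpleGraph

/-- `cnt v b l` counts positions `t` of `l` with `v ∈ l[t]` and parity of `t` given by `b`
(`b = true` ↔ `t` even). -/
def cnt (v : W) : Bool → List (Sym2 W) → ℕ
  | _, [] => 0
  | true, a :: l => (if v ∈ a then 1 else 0) + cnt v false l
  | false, _ :: l => cnt v true l

lemma cnt_parity {H : SimpleGraph W} {y z : W} (p : H.Walk y z) (v : W) :
    (cnt v true p.edges : ℤ) - cnt v false p.edges
      = (if v = y then 1 else 0) + (-1) ^ (p.length + 1) * (if v = z then 1 else 0) := by
  induction p with
  | nil =>
    simp only [Walk.edges_nil, Walk.length_nil, cnt, Nat.cast_zero, pow_one, zero_add]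
    split <;> simp
  | @cons y y' z h q ih =>
    have hne : y ≠ y' := h.ne
    have hmem : (if v ∈ s(y, y') then (1 : ℤ) else 0)
        = (if v = y then 1 else 0) + (if v = y' then 1 else 0) := by
      rcases eq_or_ne v y with rfl | h1
      · simp [Sym2.mem_iff, hne]
      · rcases eq_or_ne v y' with rfl | h2
        · simp [Sym2.mem_iff, h1]
        · simp [Sym2.mem_iff, h1, h2]
    rw [Walk.edges_cons, Walk.length_cons]
    have e1 : cnt v true (s(y, y') :: q.edges)
        = (if v ∈ s(y, y') then 1 else 0) + cnt v false q.edges := rfl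
    have e2 : cnt v false (s(y, y') :: q.edges) = cnt v true q.edges := rfl
    rw [e1, e2]
    push_cast
    rw [hmem]
    linear_combination (-1 : ℤ) * ih

lemma countP_alt (v : W) :
    ∀ (l : List (Sym2 W)) (F : Sym2 W → Fin 2),
      (∀ (t : ℕ) (ht : t < l.length), F l[t] = if Even t then 0 else 1) →
      l.countP (fun e => v ∈ e ∧ F e = 0) = cnt v true l
      ∧ l.countP (fun e => v ∈ e ∧ F e = 1) = cnt v false l := by
  classical
  intro l
  induction l with
  | nil => intro F _; simp [cnt]
  | cons a l ih =>
    intro F hF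
    have hFa : F a = 0 := by exact hF 0 (by simp)
    have hF' : ∀ (t : ℕ) (ht : t < l.length),
        F l[t] + 1 = if Even t then 0 else 1 := by
      intro t ht
      have hs := hF (t + 1) (by simpa using Nat.succ_lt_succ ht)
      simp only [List.getElem_cons_succ] at hs
      by_cases he : Even t
      · have h1 : F l[t] = 1 := by
          rw [hs, if_neg (by simp [Nat.even_add_one, he])]
        rw [h1, if_pos he]
        decide
      · have h0 : F l[t] = 0 := by
          rw [hs, if_pos (by simp [Nat.even_add_one, he])]
        rw [h0, if_neg he]
        decide
    obtain ⟨ih0, ih1⟩ := ih (fun e => F e + 1) hF'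
    have hiff0 : ∀ e : Sym2 W, (v ∈ e ∧ F e = 0) ↔ (v ∈ e ∧ F e + 1 = 1) := by
      intro e
      have : ∀ x : Fin 2, x = 0 ↔ x + 1 = 1 := by decide
      rw [this]
    have hiff1 : ∀ e : Sym2 W, (v ∈ e ∧ F e = 1) ↔ (v ∈ e ∧ F e + 1 = 0) := by
      intro e
      have : ∀ x : Fin 2, x = 1 ↔ x + 1 = 0 := by decide
      rw [this]
    constructor
    · rw [List.countP_cons]
      have hc : l.countP (fun e => v ∈ e ∧ F e = 0)
          = l.countP (fun e => v ∈ e ∧ F e + 1 = 1) := by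
        apply List.countP_congr
        intro e _
        simp only [decide_eq_true_eq]
        exact hiff0 e
      rw [hc, ih1]
      by_cases hva : v ∈ a <;> simp [cnt, hva, hFa] <;> omega
    · rw [List.countP_cons]
      have hc : l.countP (fun e => v ∈ e ∧ F e = 1)
          = l.countP (fun e => v ∈ e ∧ F e + 1 = 0) := by
        apply List.countP_congr
        intro e _
        simp only [decide_eq_true_eq]
        exact hiff1 e
      rw [hc, ih0]
      have : ¬ (v ∈ a ∧ F a = 1) := by
        rintro ⟨-, hh⟩
        rw [hFa] at hh
        exact absurd hh (by decide)
      simp [cnt, this]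

lemma countP_len :
    ∀ (l : List (Sym2 W)) (F : Sym2 W → Fin 2),
      (∀ (t : ℕ) (ht : t < l.length), F l[t] = if Even t then 0 else 1) →
      l.countP (fun e => F e = 0) = (l.length + 1) / 2
      ∧ l.countP (fun e => F e = 1) = l.length / 2 := by
  classical
  intro l
  induction l with
  | nil => intro F _; simp
  | cons a l ih =>
    intro F hF
    have hFa : F a = 0 := by exact hF 0 (by simp)
    have hF' : ∀ (t : ℕ) (ht : t < l.length),
        F l[t] + 1 = if Even t then 0 else 1 := by
      intro t ht
      have hs := hF (t + 1) (by simpa using Nat.succ_lt_succ ht)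
      simp only [List.getElem_cons_succ] at hs
      by_cases he : Even t
      · have h1 : F l[t] = 1 := by
          rw [hs, if_neg (by simp [Nat.even_add_one, he])]
        rw [h1, if_pos he]
        decide
      · have h0 : F l[t] = 0 := by
          rw [hs, if_pos (by simp [Nat.even_add_one, he])]
        rw [h0, if_neg he]
        decide
    obtain ⟨ih0, ih1⟩ := ih (fun e => F e + 1) hF'
    have h01 : ∀ x : Fin 2, x = 0 ↔ x + 1 = 1 := by decide
    have h10 : ∀ x : Fin 2, x = 1 ↔ x + 1 = 0 := by decide
    constructor
    · rw [List.countP_cons]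
      have hc : l.countP (fun e => F e = 0) = l.countP (fun e => F e + 1 = 1) := by
        apply List.countP_congr
        intro e _
        simp only [decide_eq_true_eq]
        exact h01 _
      rw [hc, ih1, List.length_cons]
      simp [hFa]
      omega
    · rw [List.countP_cons]
      have hc : l.countP (fun e => F e = 1) = l.countP (fun e => F e + 1 = 0) := by
        apply List.countP_congr
        intro e _
        simp only [decide_eq_true_eq]
        exact h10 _
      rw [hc, ih0, List.length_cons]
      have hno : ¬ (F a = 1) := by rw [hFa]; decide
      simp [hno]

end Labeling


section Core

open EdgeLabeling SimpleGraph

lemma nbr_card_eq_countP (H : SimpleGraph W) (f : Sym2 W → Fin 2) (i : Fin 2) (v : W)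
    {x : W} (p : H.Walk x x) (hp : p.IsEulerian) :
    (nbr H f i v).card = p.edges.countP (fun e => v ∈ e ∧ f e = i) := by
  classical
  rw [List.countP_eq_length_filter, ← List.toFinset_card_of_nodup
    (hp.isTrail.edges_nodup.filter _)]
  apply Finset.card_nbij' (fun w => s(v, w))
    (fun e => if h : v ∈ e then Sym2.Mem.other h else v)
  · intro w hw
    simp only [Finset.mem_coe, nbr, Finset.mem_filter, Finset.mem_univ, true_and] at hw
    simp only [Finset.mem_coe, List.mem_toFinset, List.mem_filter, decide_eq_true_eq]
    exact ⟨hp.mem_edges_iff.mpr hw.1, Sym2.mem_mk_left _ _, hw.2⟩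
  · intro e he
    simp only [Finset.mem_coe, List.mem_toFinset, List.mem_filter, decide_eq_true_eq] at he
    obtain ⟨hel, hev, hef⟩ := he
    dsimp only
    rw [dif_pos hev]
    have hspec := Sym2.other_spec hev
    have hadj : H.Adj v (Sym2.Mem.other hev) := by
      rw [← SimpleGraph.mem_edgeSet, hspec]
      exact hp.mem_edges_iff.mp hel
    simp only [Finset.mem_coe, nbr, Finset.mem_filter, Finset.mem_univ, true_and]
    exact ⟨hadj, by rw [hspec]; exact hef⟩
  · intro w hw
    simp only [Finset.mem_coe, nbr, Finset.mem_filter, Finset.mem_univ, true_and] at hw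
    have hv : v ∈ s(v, w) := Sym2.mem_mk_left _ _
    dsimp only
    rw [dif_pos hv]
    have := Sym2.other_spec hv
    rw [Sym2.congr_right] at this
    exact this
  · intro e he
    simp only [Finset.mem_coe, List.mem_toFinset, List.mem_filter, decide_eq_true_eq] at he
    dsimp only
    rw [dif_pos he.2.1]
    exact Sym2.other_spec he.2.1

lemma edgeCount_eq_countP (H : SimpleGraph W) (f : Sym2 W → Fin 2) (i : Fin 2)
    {x : W} (p : H.Walk x x) (hp : p.IsEulerian) :
    edgeCount H f i = p.edges.countP (fun e => f e = i) := by
  classical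
  have hset : H.edgeFinset.filter (fun e => f e = i)
      = (p.edges.filter (fun e => f e = i)).toFinset := by
    ext e
    simp only [Finset.mem_filter, SimpleGraph.mem_edgeFinset, List.mem_toFinset,
      List.mem_filter, decide_eq_true_eq, hp.mem_edges_iff]
  rw [edgeCount, hset, List.toFinset_card_of_nodup (hp.isTrail.edges_nodup.filter _),
    ← List.countP_eq_length_filter]

theorem core_even (H : SimpleGraph W) (hconn : H.Connected)
    (hdeg : ∀ v : W, Even (H.degree v)) (hsize : Even H.edgeFinset.card) :
    ∃ f : Sym2 W → Fin 2, (∀ v : W, (nbr H f 0 v).card = (nbr H f 1 v).card)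
      ∧ edgeCount H f 0 = edgeCount H f 1 := by
  classical
  obtain ⟨x, p, hp⟩ := euler_exists H hconn hdeg
  have hnd := hp.isTrail.edges_nodup
  have htf : p.edges.toFinset = H.edgeFinset := by
    ext e
    simp [hp.mem_edges_iff, SimpleGraph.mem_edgeFinset]
  have hlen : p.edges.length = H.edgeFinset.card := by
    rw [← List.toFinset_card_of_nodup hnd, htf]
  have hLeven : Even p.edges.length := by rw [hlen]; exact hsize
  set f : Sym2 W → Fin 2 := fun e => if Even (p.edges.idxOf e) then 0 else 1 with hf
  have hF : ∀ (t : ℕ) (ht : t < p.edges.length),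
      f p.edges[t] = if Even t then 0 else 1 := by
    intro t ht
    rw [hf]
    simp only
    rw [List.Nodup.idxOf_getElem hnd t ht]
  refine ⟨f, ?_, ?_⟩
  · intro v
    obtain ⟨h0, h1⟩ := countP_alt v p.edges f hF
    rw [nbr_card_eq_countP H f 0 v p hp, nbr_card_eq_countP H f 1 v p hp, h0, h1]
    have hpar := cnt_parity p v
    have hple : Even p.length := by rwa [← p.length_edges]
    have hpow : (-1 : ℤ) ^ (p.length + 1) = -1 := Odd.neg_one_pow hple.add_one
    rw [hpow] at hpar
    have hz : (cnt v true p.edges : ℤ) - cnt v false p.edges = 0 := by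
      rw [hpar]; ring
    have := sub_eq_zero.mp hz
    exact_mod_cast this
  · obtain ⟨hc0, hc1⟩ := countP_len p.edges f hF
    rw [edgeCount_eq_countP H f 0 p hp, edgeCount_eq_countP H f 1 p hp, hc0, hc1]
    obtain ⟨m, hm⟩ := hLeven
    omega

end Core


section Apex

open EdgeLabeling SimpleGraph

variable {V : Type*} [Fintype V]

/-- The apex graph: add a new vertex joined to all odd-degree vertices of `G`. -/
def apexGraph (G : SimpleGraph V) : SimpleGraph (Option V) where
  Adj a b :=
    match a, b with
    | some u, some v => G.Adj u v
    | none, some v => Odd (G.degree v)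
    | some u, none => Odd (G.degree u)
    | none, none => False
  symm := by
    constructor
    rintro (_ | u) (_ | v) h
    · exact h
    · exact h
    · exact h
    · exact G.symm.symm _ _ h
  loopless := by
    constructor
    rintro (_ | u) h
    · exact h
    · exact G.loopless.irrefl u h

variable {G : SimpleGraph V}

@[simp] lemma apex_adj_ss {u v : V} :
    (apexGraph G).Adj (some u) (some v) ↔ G.Adj u v := Iff.rfl

@[simp] lemma apex_adj_ns {v : V} :
    (apexGraph G).Adj none (some v) ↔ Odd (G.degree v) := Iff.rfl

@[simp] lemma apex_adj_sn {v : V} :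
    (apexGraph G).Adj (some v) none ↔ Odd (G.degree v) := Iff.rfl

@[simp] lemma apex_adj_nn : ¬ (apexGraph G).Adj none none := fun h => h

lemma apex_nf_some (v : V) :
    (apexGraph G).neighborFinset (some v)
      = (G.neighborFinset v).map Function.Embedding.some
        ∪ (if Odd (G.degree v) then {none} else ∅) := by
  classical
  ext a
  cases a with
  | none =>
    simp only [SimpleGraph.mem_neighborFinset, apex_adj_sn, Finset.mem_union, Finset.mem_map]
    constructor
    · intro h
      right
      rw [if_pos h]
      exact Finset.mem_singleton_self _
    · rintro (⟨u, _, hu⟩ | h)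
      · exact absurd hu (by simp)
      · by_cases hodd : Odd (G.degree v)
        · exact hodd
        · rw [if_neg hodd] at h
          exact absurd h (Finset.notMem_empty _)
  | some u =>
    simp only [SimpleGraph.mem_neighborFinset, apex_adj_ss, Finset.mem_union, Finset.mem_map]
    constructor
    · intro h
      exact Or.inl ⟨u, by simpa using h, rfl⟩
    · rintro (⟨w, hw, hwu⟩ | h)
      · have : w = u := by simpa [Function.Embedding.some] using hwu
        subst this
        simpa using hw
      · by_cases hodd : Odd (G.degree v)
        · rw [if_pos hodd] at h
          exact absurd h (by simp)
        · rw [if_neg hodd] at h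
          exact absurd h (Finset.notMem_empty _)

lemma apex_degree_some (v : V) :
    (apexGraph G).degree (some v) = G.degree v + if Odd (G.degree v) then 1 else 0 := by
  classical
  rw [← SimpleGraph.card_neighborFinset_eq_degree, apex_nf_some,
    Finset.card_union_of_disjoint, Finset.card_map,
    SimpleGraph.card_neighborFinset_eq_degree]
  · congr 1
    by_cases hodd : Odd (G.degree v) <;> simp [hodd]
  · by_cases hodd : Odd (G.degree v) <;> simp [hodd, Finset.disjoint_singleton_right]

lemma apex_nf_none :
    (apexGraph G).neighborFinset none
      = (Finset.univ.filter (fun v => Odd (G.degree v))).map Function.Embedding.some := by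
  classical
  ext a
  cases a with
  | none => simp
  | some u => simp [Function.Embedding.some]

lemma apex_degree_none :
    (apexGraph G).degree none = (Finset.univ.filter (fun v => Odd (G.degree v))).card := by
  classical
  rw [← SimpleGraph.card_neighborFinset_eq_degree, apex_nf_none, Finset.card_map]

lemma apex_degree_even : ∀ a : Option V, Even ((apexGraph G).degree a) := by
  classical
  rintro (_ | v)
  · rw [apex_degree_none]
    exact G.even_card_odd_degree_vertices
  · rw [apex_degree_some]
    by_cases hodd : Odd (G.degree v)
    · rw [if_pos hodd]
      exact hodd.add_one
    · rw [if_neg hodd]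
      simpa using Nat.not_odd_iff_even.mp hodd

lemma apex_connected (hconn : G.Connected) (hodd : ∃ w : V, Odd (G.degree w)) :
    (apexGraph G).Connected := by
  have hsome : ∀ u v : V, (apexGraph G).Reachable (some u) (some v) := by
    intro u v
    have := SimpleGraph.Reachable.map (⟨some, fun h => h⟩ : G →g apexGraph G)
      (hconn.preconnected u v)
    exact this
  obtain ⟨w, hw⟩ := hodd
  have hnw : (apexGraph G).Reachable none (some w) := (by simpa using hw : (apexGraph G).Adj none (some w)).reachable
  constructor
  rintro (_ | u) (_ | v)
  · exact SimpleGraph.Reachable.refl _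
  · exact hnw.trans (hsome w v)
  · exact (hnw.trans (hsome w u)).symm
  · exact hsome u v

lemma apex_size :
    (apexGraph G).edgeFinset.card
      = G.edgeFinset.card + (Finset.univ.filter (fun v => Odd (G.degree v))).card := by
  classical
  have h2 := (apexGraph G).sum_degrees_eq_twice_card_edges
  rw [Fintype.sum_option, apex_degree_none] at h2
  have h3 : ∑ v : V, (apexGraph G).degree (some v)
      = ∑ v : V, (G.degree v + if Odd (G.degree v) then 1 else 0) := by
    apply Finset.sum_congr rfl
    intro v _
    exact apex_degree_some v
  rw [h3, Finset.sum_add_distrib, G.sum_degrees_eq_twice_card_edges, Finset.sum_boole] at h2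
  simp only [Nat.cast_id] at h2
  omega

lemma apex_nbr_some (fH : Sym2 (Option V) → Fin 2) (i : Fin 2) (v : V) :
    nbr (apexGraph G) fH i (some v)
      = (nbr G (fun e => fH (Sym2.map some e)) i v).map Function.Embedding.some
        ∪ (if Odd (G.degree v) ∧ fH s(none, some v) = i then {none} else ∅) := by
  classical
  ext a
  cases a with
  | none =>
    simp only [nbr, Finset.mem_union, Finset.mem_filter, Finset.mem_univ, true_and,
      Finset.mem_map, apex_adj_sn]
    constructor
    · rintro ⟨h1, h2⟩
      right
      rw [if_pos ⟨h1, by rwa [Sym2.eq_swap]⟩]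
      exact Finset.mem_singleton_self _
    · rintro (⟨u, _, hu⟩ | h)
      · exact absurd hu (by simp)
      · by_cases hc : Odd (G.degree v) ∧ fH s(none, some v) = i
        · exact ⟨hc.1, by rw [Sym2.eq_swap]; exact hc.2⟩
        · rw [if_neg hc] at h
          exact absurd h (Finset.notMem_empty _)
  | some u =>
    simp only [nbr, Finset.mem_union, Finset.mem_filter, Finset.mem_univ, true_and,
      Finset.mem_map, apex_adj_ss]
    constructor
    · rintro ⟨h1, h2⟩
      left
      exact ⟨u, ⟨h1, by rwa [Sym2.map_pair_eq]⟩, rfl⟩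
    · rintro (⟨w, hw, hwu⟩ | h)
      · have hwu' : w = u := by simpa [Function.Embedding.some] using hwu
        subst hwu'
        obtain ⟨h1, h2⟩ := hw
        rw [Sym2.map_pair_eq] at h2
        exact ⟨h1, h2⟩
      · by_cases hc : Odd (G.degree v) ∧ fH s(none, some v) = i
        · rw [if_pos hc] at h
          exact absurd h (by simp)
        · rw [if_neg hc] at h
          exact absurd h (Finset.notMem_empty _)

lemma apex_nbr_some_card (fH : Sym2 (Option V) → Fin 2) (i : Fin 2) (v : V) :
    (nbr (apexGraph G) fH i (some v)).card
      = (nbr G (fun e => fH (Sym2.map some e)) i v).card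
        + (if Odd (G.degree v) ∧ fH s(none, some v) = i then 1 else 0) := by
  classical
  rw [apex_nbr_some, Finset.card_union_of_disjoint, Finset.card_map]
  · congr 1
    by_cases hc : Odd (G.degree v) ∧ fH s(none, some v) = i <;> simp [hc]
  · by_cases hc : Odd (G.degree v) ∧ fH s(none, some v) = i <;>
      simp [hc, Finset.disjoint_singleton_right]

lemma apex_nbr_none (fH : Sym2 (Option V) → Fin 2) (i : Fin 2) :
    nbr (apexGraph G) fH i none
      = (Finset.univ.filter
          (fun v => Odd (G.degree v) ∧ fH s(none, some v) = i)).map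
            Function.Embedding.some := by
  classical
  ext a
  cases a with
  | none => simp [nbr]
  | some u =>
    simp only [nbr, Finset.mem_filter, Finset.mem_univ, true_and, Finset.mem_map,
      apex_adj_ns]
    constructor
    · intro h
      exact ⟨u, by simpa using h, rfl⟩
    · rintro ⟨w, hw, hwu⟩
      have hwu' : w = u := by simpa [Function.Embedding.some] using hwu
      subst hwu'
      simpa using hw

lemma sym2_no_none (e' : Sym2 (Option V)) (h : ¬ (none : Option V) ∈ e') :
    ∃ e : Sym2 V, Sym2.map some e = e' := by
  revert h
  induction e' using Sym2.ind with
  | _ a b =>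
    intro h
    cases a with
    | none => exact absurd (Sym2.mem_mk_left _ _) h
    | some u =>
      cases b with
      | none => exact absurd (Sym2.mem_mk_right _ _) h
      | some w => exact ⟨s(u, w), by rw [Sym2.map_pair_eq]⟩

lemma apex_mem_edgeSet (e : Sym2 V) :
    Sym2.map some e ∈ (apexGraph G).edgeSet ↔ e ∈ G.edgeSet := by
  induction e using Sym2.ind with
  | _ a b =>
    rw [Sym2.map_pair_eq, SimpleGraph.mem_edgeSet, SimpleGraph.mem_edgeSet]
    exact apex_adj_ss

lemma apex_none_not_mem_map (e : Sym2 V) : (none : Option V) ∉ Sym2.map some e := by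
  induction e using Sym2.ind with
  | _ a b =>
    rw [Sym2.map_pair_eq]
    simp

lemma apex_edgeCount (fH : Sym2 (Option V) → Fin 2) (i : Fin 2) :
    edgeCount (apexGraph G) fH i
      = edgeCount G (fun e => fH (Sym2.map some e)) i
        + (nbr (apexGraph G) fH i none).card := by
  classical
  set S := (apexGraph G).edgeFinset.filter (fun e => fH e = i) with hS
  have hsplit := Finset.card_filter_add_card_filter_not
    (s := S) (p := fun e => none ∈ e)
  have hA : edgeCount G (fun e => fH (Sym2.map some e)) i
      = (S.filter (fun e => ¬ none ∈ e)).card := by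
    rw [edgeCount]
    apply Finset.card_bij (fun e _ => Sym2.map some e)
    · intro e he
      rw [Finset.mem_filter] at he
      obtain ⟨heE, hef⟩ := he
      rw [SimpleGraph.mem_edgeFinset] at heE
      rw [Finset.mem_filter, hS, Finset.mem_filter, SimpleGraph.mem_edgeFinset]
      exact ⟨⟨(apex_mem_edgeSet e).mpr heE, hef⟩, apex_none_not_mem_map e⟩
    · intro e1 _ e2 _ heq
      exact Sym2.map.injective (Option.some_injective V) heq
    · intro e' he'
      rw [Finset.mem_filter, hS, Finset.mem_filter, SimpleGraph.mem_edgeFinset] at he'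
      obtain ⟨⟨heE, hef⟩, hnone⟩ := he'
      obtain ⟨e, rfl⟩ := sym2_no_none e' hnone
      refine ⟨e, ?_, rfl⟩
      rw [Finset.mem_filter, SimpleGraph.mem_edgeFinset]
      exact ⟨(apex_mem_edgeSet e).mp heE, hef⟩
  have hB : (nbr (apexGraph G) fH i none).card = (S.filter (fun e => none ∈ e)).card := by
    apply Finset.card_bij (fun u _ => s(none, u))
    · intro u hu
      rw [nbr, Finset.mem_filter] at hu
      obtain ⟨-, h1, h2⟩ := hu
      rw [Finset.mem_filter, hS, Finset.mem_filter, SimpleGraph.mem_edgeFinset]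
      exact ⟨⟨h1, h2⟩, Sym2.mem_mk_left _ _⟩
    · intro u1 h1 u2 h2 heq
      rwa [Sym2.congr_right] at heq
    · intro e' he'
      rw [Finset.mem_filter, hS, Finset.mem_filter, SimpleGraph.mem_edgeFinset] at he'
      obtain ⟨⟨heE, hef⟩, hnone⟩ := he'
      refine ⟨Sym2.Mem.other hnone, ?_, Sym2.other_spec hnone⟩
      rw [nbr, Finset.mem_filter]
      have hspec := Sym2.other_spec hnone
      refine ⟨Finset.mem_univ _, ?_, ?_⟩
      · rw [← SimpleGraph.mem_edgeSet, hspec]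
        exact heE
      · rw [hspec]
        exact hef
  have hE : edgeCount (apexGraph G) fH i = S.card := by rw [edgeCount, hS]
  omega

theorem apex_main (hconn : G.Connected) (hsize : Even G.edgeFinset.card) :
    ∃ f : Sym2 V → Fin 2, EdgeFriendly G f ∧
      edgeCount G f 0 = edgeCount G f 1 ∧
      |(vertexCount G f 0 : ℤ) - (vertexCount G f 1 : ℤ)| ≤ 1 ∧
      ∀ v : V, Even (G.degree v) → Unlabeled G f v := by
  classical
  by_cases hodd : ∃ w : V, Odd (G.degree w)
  · -- apex construction
    have hdegH := apex_degree_even (G := G)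
    have hconnH := apex_connected hconn hodd
    have hsizeH : Even (apexGraph G).edgeFinset.card := by
      rw [apex_size]
      exact hsize.add G.even_card_odd_degree_vertices
    obtain ⟨fH, hbal, hec⟩ := core_even (apexGraph G) hconnH hdegH hsizeH
    set f : Sym2 V → Fin 2 := fun e => fH (Sym2.map some e) with hf
    have hnone01 : (nbr (apexGraph G) fH 0 none).card = (nbr (apexGraph G) fH 1 none).card :=
      hbal none
    -- vertex label analysis
    have heven : ∀ v : V, Even (G.degree v) → Unlabeled G f v := by
      intro v hv
      have hnotodd : ¬ Odd (G.degree v) := by simpa [Nat.not_odd_iff_even] using hv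
      have h0 := apex_nbr_some_card (G := G) fH 0 v
      have h1 := apex_nbr_some_card (G := G) fH 1 v
      rw [if_neg (by tauto)] at h0
      rw [if_neg (by tauto)] at h1
      rw [← hf] at h0 h1
      have := hbal (some v)
      rw [h0, h1] at this
      unfold Unlabeled vertexLabel
      rw [if_neg (by omega), if_neg (by omega)]
    have hoddlab : ∀ v : V, Odd (G.degree v) →
        vertexLabel G f v = some (fH s(none, some v) + 1) := by
      intro v hv
      have h0 := apex_nbr_some_card (G := G) fH 0 v
      have h1 := apex_nbr_some_card (G := G) fH 1 v
      rw [← hf] at h0 h1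
      have hb := hbal (some v)
      have hj : fH s(none, some v) = 0 ∨ fH s(none, some v) = 1 :=
        (by decide : ∀ x : Fin 2, x = 0 ∨ x = 1) _
      rcases hj with hj | hj
      · rw [if_pos ⟨hv, hj⟩] at h0
        rw [if_neg (by rw [hj]; rintro ⟨-, hh⟩; exact absurd hh (by decide))] at h1
        rw [hb, h1] at h0
        unfold vertexLabel
        rw [if_neg (by omega), if_pos (by omega), hj]
        rfl
      · rw [if_pos ⟨hv, hj⟩] at h1
        rw [if_neg (by rw [hj]; rintro ⟨-, hh⟩; exact absurd hh (by decide))] at h0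
        rw [← hb, h0] at h1
        unfold vertexLabel
        rw [if_pos (by omega), hj]
        rfl
    have hvcount : ∀ i : Fin 2, vertexCount G f i
        = (nbr (apexGraph G) fH (i + 1) none).card := by
      intro i
      rw [vertexCount, apex_nbr_none, Finset.card_map]
      congr 1
      ext v
      simp only [Finset.mem_filter, Finset.mem_univ, true_and]
      constructor
      · intro hlab
        by_cases hv : Odd (G.degree v)
        · rw [hoddlab v hv] at hlab
          have : fH s(none, some v) + 1 = i := by
            exact Option.some_injective _ hlab
          refine ⟨hv, ?_⟩
          have hfin : ∀ x y : Fin 2, x + 1 = y → x = y + 1 := by decide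
          exact hfin _ _ this
        · have hv' : Even (G.degree v) := Nat.not_odd_iff_even.mp hv
          have := heven v hv'
          unfold Unlabeled at this
          rw [this] at hlab
          exact absurd hlab (by simp)
      · rintro ⟨hv, hfi⟩
        rw [hoddlab v hv, hfi]
        congr 1
        exact (by decide : ∀ y : Fin 2, y + 1 + 1 = y) i
    have hec0 := apex_edgeCount (G := G) fH 0
    have hec1 := apex_edgeCount (G := G) fH 1
    rw [← hf] at hec0 hec1
    have hecG : edgeCount G f 0 = edgeCount G f 1 := by
      rw [hec0, hec1, hnone01] at hec
      omega
    refine ⟨f, ?_, hecG, ?_, heven⟩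
    · unfold EdgeFriendly
      rw [hecG]
      simp
    · rw [hvcount 0, hvcount 1]
      have h01 : (0 : Fin 2) + 1 = 1 := by decide
      have h10 : (1 : Fin 2) + 1 = 0 := by decide
      rw [h01, h10, hnone01]
      simp
  · -- all degrees even
    push_neg at hodd
    have hdeg : ∀ v : V, Even (G.degree v) := by
      intro v
      have := hodd v
      simpa [Nat.not_odd_iff_even] using this
    obtain ⟨f, hbal, hec⟩ := core_even G hconn hdeg hsize
    have hunl : ∀ v : V, Unlabeled G f v := by
      intro v
      unfold Unlabeled vertexLabel
      rw [hbal v]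
      simp
    have hvc : ∀ i : Fin 2, vertexCount G f i = 0 := by
      intro i
      rw [vertexCount, Finset.card_eq_zero]
      ext v
      simp only [Finset.mem_filter, Finset.mem_univ, true_and, Finset.notMem_empty,
        iff_false]
      rw [hunl v]
      simp
    refine ⟨f, ?_, hec, ?_, fun v _ => hunl v⟩
    · unfold EdgeFriendly
      rw [hec]
      simp
    · rw [hvc 0, hvc 1]
      simp

end Apex

end EulerAux

open EdgeLabeling

/-- Every simple connected graph of even size admits an
edge-friendly labeling with `e_f(0) = e_f(1)` and `|v_f(0) - v_f(1)| ≤ 1`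
under which every vertex of even degree is unlabeled. -/
theorem connected_even_size_even_degree_unlabeled
    {V : Type*} [Fintype V] (G : SimpleGraph V)
    (hconn : G.Connected) (hsize : Even G.edgeFinset.card) :
    ∃ f : Sym2 V → Fin 2, EdgeFriendly G f ∧
      edgeCount G f 0 = edgeCount G f 1 ∧
      |(vertexCount G f 0 : ℤ) - (vertexCount G f 1 : ℤ)| ≤ 1 ∧
      ∀ v : V, Even (G.degree v) → Unlabeled G f v := by
  exact EulerAux.apex_main (G := G) hconn hsize
end
end

section
/- For every odd integer n ≥ 7, the complete graph K_n is opinionated; that is, there exists an edge-friendly binary edge labeling f of K_n such that no vertex is unlabeled under the induced partial vertex labeling f⁺ (equivalently, for every vertex v, |N_0(v)| ≠ |N_1(v)|). -/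
/-!
Edge-friendly labelings (Krop, Lee, Raridan).  A binary edge labeling of a
graph `G` is `f : Sym2 V → Fin 2` (only its values on edges matter).  For
`i : Fin 2`, `nbr G f i v` is the set `N_i(v)` of neighbors of `v` joined to
`v` by an `i`-edge, `edgeCount G f i` is `e_f(i)`, and `vertexLabel G f v` is
the induced partial vertex label `f⁺(v)` (with `none` meaning unlabeled).
-/

open Finset

attribute [local instance] Classical.propDecidable

noncomputable section

open EdgeLabeling

namespace KLR


def s2 (m : ℕ) : ℕ := m - m / 2
def L1 (m : ℕ) : ℕ := (m / 2 + 1) % 2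
def L2 (m : ℕ) : ℕ := (m - m / 2) % 2
def pu (m v : ℕ) : Option ℕ :=
  if v ≤ m / 2 then
    if L1 m = 1 ∧ v = 0 then some (m / 2 + 1)
    else if (v - L1 m) % 2 = 0 then some (v + 1) else some (v - 1)
  else if m + 1 ≤ v ∧ v ≤ m + s2 m then
    if L2 m = 1 ∧ v = m + 1 then some (2 * m)
    else if (v - (m + 1) - L2 m) % 2 = 0 then some (v + 1) else some (v - 1)
  else if L1 m = 1 ∧ v = m / 2 + 1 then some 0
  else if L2 m = 1 ∧ v = 2 * m then some (m + 1)
  else none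
def pw (m v : ℕ) : Option ℕ :=
  if L1 m = 1 ∧ v = m / 2 + 1 then some m
  else if L1 m = 1 ∧ v = m then some (m / 2 + 1)
  else if L2 m = 1 ∧ v = 2 * m - 1 then some (2 * m)
  else if L2 m = 1 ∧ v = 2 * m then some (2 * m - 1)
  else none

theorem pu_invol {m a b : ℕ} (hm : 3 ≤ m) (h : pu m a = some b) : pu m b = some a := by
  unfold pu s2 L1 L2 at h ⊢
  split_ifs at h <;> injection h with h <;> subst h <;>
    split_ifs <;> first | exact (‹_ ∧ False›).2.elim | (simp only [Option.some.injEq]; omega) | (exfalso; omega)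

theorem pu_bounds {m a b : ℕ} (hm : 3 ≤ m) (h : pu m a = some b) :
    a ≤ 2 * m ∧ b ≤ 2 * m ∧ a ≠ b ∧ (a + b ≤ m ∨ (2 * m + 1 ≤ a + b ∧ a + b ≤ 3 * m + 1)) := by
  unfold pu s2 L1 L2 at h
  split_ifs at h <;> injection h with h <;> omega

theorem pw_invol {m a b : ℕ} (hm : 3 ≤ m) (h : pw m a = some b) : pw m b = some a := by
  unfold pw L1 L2 at h ⊢
  split_ifs at h <;> injection h with h <;> subst h <;>
    split_ifs <;> first | exact (‹_ ∧ False›).2.elim | (simp only [Option.some.injEq]; omega) | (exfalso; omega)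

theorem pw_bounds {m a b : ℕ} (hm : 3 ≤ m) (h : pw m a = some b) :
    a ≤ 2 * m ∧ b ≤ 2 * m ∧ a ≠ b ∧
      ((m + 1 ≤ a + b ∧ a + b ≤ 2 * m) ∨ (3 * m + 2 ≤ a + b ∧ a + b ≤ 4 * m)) := by
  unfold pw L1 L2 at h
  split_ifs at h <;> injection h with h <;> omega

theorem pu_ne_none_iff {m v : ℕ} (hm : 3 ≤ m) :
    pu m v ≠ none ↔ (v ≤ m / 2 ∨ (m + 1 ≤ v ∧ v ≤ m + s2 m) ∨
      (L1 m = 1 ∧ v = m / 2 + 1) ∨ (L2 m = 1 ∧ v = 2 * m)) := by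
  unfold pu s2 L1 L2
  split_ifs <;> simp only [ne_eq, reduceCtorEq, not_false_eq_true, true_iff, not_true_eq_false,
    false_iff] <;> omega

theorem pw_ne_none_iff {m v : ℕ} (hm : 3 ≤ m) :
    pw m v ≠ none ↔ ((L1 m = 1 ∧ (v = m / 2 + 1 ∨ v = m)) ∨
      (L2 m = 1 ∧ (v = 2 * m - 1 ∨ v = 2 * m))) := by
  unfold pw L1 L2
  split_ifs <;> simp only [ne_eq, reduceCtorEq, not_false_eq_true, true_iff, not_true_eq_false,
    false_iff] <;> omega

theorem mod_cases {x n : ℕ} (h0 : 0 < n) (hx : x < 2 * n) :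
    x % n = if x < n then x else x - n := by
  split_ifs with h
  · exact Nat.mod_eq_of_lt h
  · rw [Nat.mod_eq_sub_mod (Nat.le_of_not_lt h), Nat.mod_eq_of_lt (by omega)]

def F (m : ℕ) (u v : Fin (2 * m + 1)) : Fin 2 :=
  if pu m u.val = some v.val ∨ pu m v.val = some u.val then 1
  else if pw m u.val = some v.val ∨ pw m v.val = some u.val then 0
  else if m + 1 ≤ (u.val + v.val) % (2 * m + 1) then 1 else 0

theorem F_symm (m : ℕ) (u v : Fin (2 * m + 1)) : F m u v = F m v u := by
  simp only [F, Nat.add_comm u.val v.val, or_comm]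

def lab (m : ℕ) : Sym2 (Fin (2 * m + 1)) → Fin 2 := Sym2.lift ⟨F m, F_symm m⟩

@[simp] theorem lab_mk (m : ℕ) (u v : Fin (2 * m + 1)) : lab m s(u, v) = F m u v := rfl

/-- neighbors of `v` whose base label is 1 -/
def NB (m : ℕ) (v : Fin (2 * m + 1)) : Finset (Fin (2 * m + 1)) :=
  univ.filter fun u => v ≠ u ∧ m + 1 ≤ (v.val + u.val) % (2 * m + 1)

def PU (m : ℕ) (v : Fin (2 * m + 1)) : Finset (Fin (2 * m + 1)) :=
  univ.filter fun u => pu m v.val = some u.val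

def PW (m : ℕ) (v : Fin (2 * m + 1)) : Finset (Fin (2 * m + 1)) :=
  univ.filter fun u => pw m v.val = some u.val

variable {m : ℕ}

theorem mem_PU {v u : Fin (2 * m + 1)} : u ∈ PU m v ↔ pu m v.val = some u.val := by
  simp [PU]

theorem mem_PW {v u : Fin (2 * m + 1)} : u ∈ PW m v ↔ pw m v.val = some u.val := by
  simp [PW]

theorem mem_NB {v u : Fin (2 * m + 1)} :
    u ∈ NB m v ↔ v ≠ u ∧ m + 1 ≤ (v.val + u.val) % (2 * m + 1) := by
  simp [NB]

theorem PU_card (hm : 3 ≤ m) (v : Fin (2 * m + 1)) :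
    (PU m v).card = if (pu m v.val).isSome then 1 else 0 := by
  rcases h : pu m v.val with _ | p
  · simp only [h, Option.isSome_none, if_neg Bool.false_ne_true]
    rw [Finset.card_eq_zero]
    ext u; simp [mem_PU, h]
  · have hb := pu_bounds hm h
    simp only [h, Option.isSome_some, if_pos rfl]
    rw [if_pos trivial, Finset.card_eq_one]
    refine ⟨⟨p, by omega⟩, ?_⟩
    ext u; simp only [mem_PU, h, Option.some.injEq, Finset.mem_singleton, Fin.ext_iff]
    exact eq_comm

theorem PW_card (hm : 3 ≤ m) (v : Fin (2 * m + 1)) :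
    (PW m v).card = if (pw m v.val).isSome then 1 else 0 := by
  rcases h : pw m v.val with _ | p
  · simp only [h, Option.isSome_none, if_neg Bool.false_ne_true]
    rw [Finset.card_eq_zero]
    ext u; simp [mem_PW, h]
  · have hb := pw_bounds hm h
    simp only [h, Option.isSome_some, if_pos rfl]
    rw [if_pos trivial, Finset.card_eq_one]
    refine ⟨⟨p, by omega⟩, ?_⟩
    ext u; simp only [mem_PW, h, Option.some.injEq, Finset.mem_singleton, Fin.ext_iff]
    exact eq_comm

theorem PU_disj_NB (hm : 3 ≤ m) (v : Fin (2 * m + 1)) : Disjoint (PU m v) (NB m v) := by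
  rw [Finset.disjoint_left]
  intro u hu hnb
  rw [mem_PU] at hu
  rw [mem_NB] at hnb
  have hb := pu_bounds hm hu
  have h2 := hnb.2
  rw [mod_cases (by omega) (by omega)] at h2
  split_ifs at h2 <;> omega

theorem PW_subset_NB (hm : 3 ≤ m) (v : Fin (2 * m + 1)) : PW m v ⊆ NB m v := by
  intro u hu
  rw [mem_PW] at hu
  have hb := pw_bounds hm hu
  rw [mem_NB, mod_cases (by omega) (by omega)]
  constructor
  · intro he; rw [he] at hb; omega
  · split_ifs <;> omega

theorem card_filter_val (n : ℕ) (p : ℕ → Prop) [DecidablePred p] :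
    (univ.filter fun v : Fin n => p v.val).card = ((Finset.range n).filter p).card := by
  apply Finset.card_nbij (i := Fin.val)
  · intro a ha
    simp only [Finset.mem_coe, Finset.mem_filter, Finset.mem_univ, true_and] at ha
    simp [Finset.mem_coe, Finset.mem_filter, Finset.mem_range, a.isLt, ha]
  · exact fun a _ b _ h => Fin.val_injective h
  · intro x hx
    simp only [Finset.coe_filter, Finset.mem_range, Set.mem_setOf_eq] at hx
    exact ⟨⟨x, hx.1⟩, by simp [hx.2], rfl⟩

theorem card_ge_filter (n k : ℕ) (hk : k ≤ n) :
    (univ.filter fun v : Fin n => k ≤ v.val).card = n - k := by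
  rw [card_filter_val]
  have : (Finset.range n).filter (fun x => k ≤ x) = Finset.Ico k n := by
    ext x; simp [Finset.mem_range, Finset.mem_Ico]; omega
  rw [this, Nat.card_Ico]

theorem NB_card (hm : 3 ≤ m) (v : Fin (2 * m + 1)) :
    (NB m v).card = m - (if m + 1 ≤ (v.val + v.val) % (2 * m + 1) then 1 else 0) := by
  haveI : NeZero (2 * m + 1) := ⟨by omega⟩
  have key : (NB m v).card
      = ((univ.filter fun w : Fin (2 * m + 1) => m + 1 ≤ w.val).erase (v + v)).card := by
    apply Finset.card_nbij' (i := fun u => v + u) (j := fun w => w - v)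
    · intro u hu
      rw [Finset.mem_coe, mem_NB] at hu
      rw [Finset.mem_coe, Finset.mem_erase]
      constructor
      · intro he
        exact hu.1 (add_left_cancel he).symm
      · simp only [Finset.mem_filter, Finset.mem_univ, true_and]
        rw [Fin.val_add]
        exact hu.2
    · intro w hw
      dsimp only
      rw [Finset.mem_coe, Finset.mem_erase, Finset.mem_filter] at hw
      have hvw : v + (w - v) = w := by abel
      rw [Finset.mem_coe, mem_NB]
      constructor
      · intro he
        apply hw.1
        rw [← hvw, ← he]
      · have : (v + (w - v)).val = (v.val + (w - v).val) % (2 * m + 1) := Fin.val_add _ _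
        rw [hvw] at this
        rw [← this]
        exact hw.2.2
    · intro a _; dsimp only; abel
    · intro a _; dsimp only; abel
  rw [key]
  by_cases hb : m + 1 ≤ ((v + v : Fin (2 * m + 1))).val
  · rw [Finset.card_erase_of_mem (by simpa using hb), card_ge_filter _ _ (by omega)]
    rw [Fin.val_add] at hb
    rw [if_pos hb]
    omega
  · rw [Finset.erase_eq_of_notMem (by simpa using hb), card_ge_filter _ _ (by omega)]
    rw [Fin.val_add] at hb
    rw [if_neg hb]
    omega


theorem nbr_one_eq (hm : 3 ≤ m) (v : Fin (2 * m + 1)) :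
    nbr ⊤ (lab m) 1 v = (NB m v \ PW m v) ∪ PU m v := by
  ext u
  simp only [nbr, Finset.mem_filter, Finset.mem_univ, true_and, SimpleGraph.top_adj,
    Finset.mem_union, Finset.mem_sdiff, mem_NB, mem_PU, mem_PW, lab_mk, F]
  by_cases hU : pu m (v : ℕ) = some (u : ℕ)
  · have hb := pu_bounds hm hU
    rw [if_pos (Or.inl hU)]
    constructor
    · intro _; exact Or.inr hU
    · intro _; exact ⟨fun he => hb.2.2.1 (congrArg Fin.val he), rfl⟩
  · have hU' : ¬ (pu m (v : ℕ) = some (u : ℕ) ∨ pu m (u : ℕ) = some (v : ℕ)) := by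
      rintro (h | h)
      · exact hU h
      · exact hU (pu_invol hm h)
    rw [if_neg hU']
    by_cases hW : pw m (v : ℕ) = some (u : ℕ)
    · rw [if_pos (Or.inl hW)]
      constructor
      · intro h; exact absurd h.2 (by decide)
      · rintro (⟨_, hnw⟩ | hpu)
        · exact absurd hW hnw
        · exact absurd hpu hU
    · have hW' : ¬ (pw m (v : ℕ) = some (u : ℕ) ∨ pw m (u : ℕ) = some (v : ℕ)) := by
        rintro (h | h)
        · exact hW h
        · exact hW (pw_invol hm h)
      rw [if_neg hW']
      constructor
      · rintro ⟨h1, h2⟩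
        left
        refine ⟨⟨h1, ?_⟩, hW⟩
        by_contra hb2
        rw [if_neg hb2] at h2
        exact absurd h2 (by decide)
      · rintro (⟨⟨h1, h2⟩, _⟩ | hpu)
        · exact ⟨h1, by rw [if_pos h2]⟩
        · exact absurd hpu hU

theorem nbr_one_card (hm : 3 ≤ m) (v : Fin (2 * m + 1)) :
    (nbr ⊤ (lab m) 1 v).card + (PW m v).card = (NB m v).card + (PU m v).card := by
  rw [nbr_one_eq hm v]
  have hd : Disjoint (NB m v \ PW m v) (PU m v) :=
    (Finset.disjoint_of_subset_left Finset.sdiff_subset (PU_disj_NB hm v).symm)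
  rw [Finset.card_union_of_disjoint hd, Finset.card_sdiff_of_subset (PW_subset_NB hm v)]
  have := Finset.card_le_card (PW_subset_NB hm v)
  omega

/-- `v` is "good" iff `m+1 ≤ 2v mod n`, i.e. base count at `v` is `m - 1`. -/
theorem good_iff (hm : 3 ≤ m) (v : Fin (2 * m + 1)) :
    m + 1 ≤ (v.val + v.val) % (2 * m + 1) ↔
      ((m / 2 + 1 ≤ v.val ∧ v.val ≤ m) ∨ (m + s2 m + 1 ≤ v.val)) := by
  have hv := v.isLt
  rw [mod_cases (by omega) (by omega)]
  unfold s2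
  split_ifs <;> omega

/-- the vertex label count `c₁(v) = |N₁(v)|` is never `m`. -/
theorem c_one_ne (hm : 3 ≤ m) (v : Fin (2 * m + 1)) :
    (nbr ⊤ (lab m) 1 v).card ≠ m := by
  have key := nbr_one_card hm v
  have hNB := NB_card hm v
  have hPU := PU_card hm v
  have hPW := PW_card hm v
  have hv := v.isLt
  by_cases hg : m + 1 ≤ (v.val + v.val) % (2 * m + 1)
  · -- good vertex: c₁ ∈ {m-1, m-2}
    rw [if_pos hg] at hNB
    have hgood := (good_iff hm v).mp hg
    -- on goods, pu some → pw some
    by_cases hpu : (pu m v.val).isSome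
    · have hpu' := (pu_ne_none_iff hm).mp (Option.isSome_iff_ne_none.mp hpu)
      have hpw : (pw m v.val).isSome := by
        rw [Option.isSome_iff_ne_none, pw_ne_none_iff hm]
        first | simp only [s2, L1, L2] at * | skip
        omega
      rw [if_pos hpu] at hPU
      rw [if_pos hpw] at hPW
      omega
    · rw [if_neg hpu] at hPU
      first | simp only [s2, L1, L2] at * | skip
      omega
  · -- bad vertex: c₁ = m + 1
    rw [if_neg hg] at hNB
    have hbad : ¬ (((m / 2 + 1 ≤ v.val ∧ v.val ≤ m) ∨ (m + s2 m + 1 ≤ v.val))) :=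
      fun h => hg ((good_iff hm v).mpr h)
    have hpu : (pu m v.val).isSome := by
      rw [Option.isSome_iff_ne_none, pu_ne_none_iff hm]
      first | simp only [s2] at * | skip
      omega
    have hpw : ¬ (pw m v.val).isSome := by
      rw [Option.isSome_iff_ne_none, pw_ne_none_iff hm]
      first | simp only [s2, L1, L2] at * | skip
      omega
    rw [if_pos hpu] at hPU
    rw [if_neg hpw] at hPW
    omega

theorem count_good (hm : 3 ≤ m) :
    (univ.filter fun v : Fin (2 * m + 1) => m + 1 ≤ (v.val + v.val) % (2 * m + 1)).card = m := by
  have h1 : (univ.filter fun v : Fin (2 * m + 1) => m + 1 ≤ (v.val + v.val) % (2 * m + 1))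
      = univ.filter fun v : Fin (2 * m + 1) =>
          ((m / 2 + 1 ≤ v.val ∧ v.val ≤ m) ∨ (m + s2 m + 1 ≤ v.val)) := by
    ext v
    simp only [Finset.mem_filter, Finset.mem_univ, true_and]
    exact good_iff hm v
  rw [h1, card_filter_val _ (fun x => m / 2 + 1 ≤ x ∧ x ≤ m ∨ m + s2 m + 1 ≤ x)]
  have h2 : ((Finset.range (2 * m + 1)).filter
        fun x => ((m / 2 + 1 ≤ x ∧ x ≤ m) ∨ (m + s2 m + 1 ≤ x)))
      = Finset.Icc (m / 2 + 1) m ∪ Finset.Icc (m + s2 m + 1) (2 * m) := by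
    ext x
    simp only [Finset.mem_filter, Finset.mem_range, Finset.mem_union, Finset.mem_Icc]
    simp only [s2]
    omega
  rw [h2, Finset.card_union_of_disjoint, Nat.card_Icc, Nat.card_Icc]
  · simp only [s2]; omega
  · simp only [Finset.disjoint_left, Finset.mem_Icc, s2]
    intro x hx1 hx2
    omega

theorem sum_NB (hm : 3 ≤ m) : (∑ v : Fin (2 * m + 1), (NB m v).card) + m = (2 * m + 1) * m := by
  have hpt : ∀ v : Fin (2 * m + 1),
      (NB m v).card + (if m + 1 ≤ (v.val + v.val) % (2 * m + 1) then 1 else 0) = m := by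
    intro v
    rw [NB_card hm v]
    split_ifs <;> omega
  have hsum := Finset.sum_congr rfl (fun v (_ : v ∈ (univ : Finset (Fin (2 * m + 1)))) => hpt v)
  rw [Finset.sum_add_distrib, ← Finset.card_filter, count_good hm, Finset.sum_const,
    Finset.card_univ, Fintype.card_fin, smul_eq_mul] at hsum
  omega

theorem count_pu (hm : 3 ≤ m) :
    (univ.filter fun v : Fin (2 * m + 1) => pu m v.val ≠ none).card
      = m + 1 + L1 m + L2 m := by
  rw [card_filter_val _ (fun x => pu m x ≠ none)]
  have h2 : ((Finset.range (2 * m + 1)).filter fun x => pu m x ≠ none)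
      = (Finset.range (m / 2 + 1 + L1 m) ∪ Finset.Icc (m + 1) (m + s2 m)) ∪
          Finset.Icc (2 * m) (2 * m - 1 + L2 m) := by
    ext x
    simp only [Finset.mem_filter, Finset.mem_range, Finset.mem_union, Finset.mem_Icc,
      pu_ne_none_iff hm]
    simp only [s2, L1, L2]
    omega
  rw [h2, Finset.card_union_of_disjoint, Finset.card_union_of_disjoint, Finset.card_range,
    Nat.card_Icc, Nat.card_Icc]
  · simp only [s2, L1, L2]; omega
  · simp only [Finset.disjoint_left, Finset.mem_range, Finset.mem_Icc, s2, L1, L2]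
    intro x hx1 hx2
    omega
  · simp only [Finset.disjoint_left, Finset.mem_union, Finset.mem_range, Finset.mem_Icc,
      s2, L1, L2]
    intro x hx1 hx2
    omega

theorem count_pw (hm : 3 ≤ m) :
    (univ.filter fun v : Fin (2 * m + 1) => pw m v.val ≠ none).card
      = 2 * L1 m + 2 * L2 m := by
  rw [card_filter_val _ (fun x => pw m x ≠ none)]
  have h2 : ((Finset.range (2 * m + 1)).filter fun x => pw m x ≠ none)
      = (Finset.Icc (m / 2 + 1) (m / 2 + L1 m) ∪ Finset.Icc m (m - 1 + L1 m)) ∪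
          Finset.Icc (2 * m - 1) (2 * m - 2 + 2 * L2 m) := by
    ext x
    simp only [Finset.mem_filter, Finset.mem_range, Finset.mem_union, Finset.mem_Icc,
      pw_ne_none_iff hm]
    simp only [s2, L1, L2]
    omega
  rw [h2, Finset.card_union_of_disjoint, Finset.card_union_of_disjoint,
    Nat.card_Icc, Nat.card_Icc, Nat.card_Icc]
  · simp only [s2, L1, L2]; omega
  · simp only [Finset.disjoint_left, Finset.mem_Icc, s2, L1, L2]
    intro x hx1 hx2
    omega
  · simp only [Finset.disjoint_left, Finset.mem_union, Finset.mem_Icc, s2, L1, L2]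
    intro x hx1 hx2
    omega

theorem sum_PU (hm : 3 ≤ m) :
    (∑ v : Fin (2 * m + 1), (PU m v).card) = m + 1 + L1 m + L2 m := by
  have hpt : ∀ v : Fin (2 * m + 1), (PU m v).card = if pu m v.val ≠ none then 1 else 0 := by
    intro v
    rw [PU_card hm v]
    by_cases h : pu m v.val = none <;> simp [h]
  rw [Finset.sum_congr rfl (fun v _ => hpt v), ← Finset.card_filter, count_pu hm]

theorem sum_PW (hm : 3 ≤ m) :
    (∑ v : Fin (2 * m + 1), (PW m v).card) = 2 * L1 m + 2 * L2 m := by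
  have hpt : ∀ v : Fin (2 * m + 1), (PW m v).card = if pw m v.val ≠ none then 1 else 0 := by
    intro v
    rw [PW_card hm v]
    by_cases h : pw m v.val = none <;> simp [h]
  rw [Finset.sum_congr rfl (fun v _ => hpt v), ← Finset.card_filter, count_pw hm]

theorem sum_c_one (hm : 3 ≤ m) :
    (∑ v : Fin (2 * m + 1), (nbr ⊤ (lab m) 1 v).card) + L1 m + L2 m
      = 2 * m * m + m + 1 := by
  have h := Finset.sum_congr rfl
    (fun v (_ : v ∈ (univ : Finset (Fin (2 * m + 1)))) => nbr_one_card hm v)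
  rw [Finset.sum_add_distrib, Finset.sum_add_distrib, sum_PW hm, sum_PU hm] at h
  have h2 := sum_NB hm
  have h3 : (2 * m + 1) * m = 2 * m * m + m := by ring
  omega

theorem c_zero_add_c_one (hm : 3 ≤ m) (v : Fin (2 * m + 1)) :
    (nbr ⊤ (lab m) 0 v).card + (nbr ⊤ (lab m) 1 v).card = 2 * m := by
  have hdisj : Disjoint (nbr ⊤ (lab m) 0 v) (nbr ⊤ (lab m) 1 v) := by
    rw [Finset.disjoint_left]
    intro u h0 h1
    simp only [nbr, Finset.mem_filter, Finset.mem_univ, true_and] at h0 h1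
    rw [h0.2] at h1
    exact absurd h1.2 (by decide)
  have hunion : nbr ⊤ (lab m) 0 v ∪ nbr ⊤ (lab m) 1 v = univ.erase v := by
    ext u
    simp only [nbr, Finset.mem_union, Finset.mem_filter, Finset.mem_univ, true_and,
      Finset.mem_erase, SimpleGraph.top_adj, and_true]
    constructor
    · rintro (⟨h, _⟩ | ⟨h, _⟩) <;> exact fun he => h he.symm
    · intro h
      have hne : v ≠ u := fun he => h he.symm
      rcases (by decide : ∀ x : Fin 2, x = 0 ∨ x = 1) (lab m s(v, u)) with h01 | h01
      · exact Or.inl ⟨hne, h01⟩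
      · exact Or.inr ⟨hne, h01⟩
  have := Finset.card_union_of_disjoint hdisj
  rw [hunion, Finset.card_erase_of_mem (Finset.mem_univ v), Finset.card_univ,
    Fintype.card_fin] at this
  omega

/-- the subgraph of `⊤` consisting of `i`-labeled edges -/
def Gi (m : ℕ) (i : Fin 2) : SimpleGraph (Fin (2 * m + 1)) where
  Adj a b := a ≠ b ∧ lab m s(a, b) = i
  symm := by
    constructor
    intro a b h
    refine ⟨h.1.symm, ?_⟩
    rw [Sym2.eq_swap]
    exact h.2
  loopless := ⟨fun a h => h.1 rfl⟩

theorem Gi_degree (i : Fin 2) (v : Fin (2 * m + 1)) :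
    (Gi m i).degree v = (nbr ⊤ (lab m) i v).card := by
  rw [← SimpleGraph.card_neighborFinset_eq_degree]
  congr 1
  ext u
  simp only [SimpleGraph.mem_neighborFinset, nbr, Finset.mem_filter, Finset.mem_univ, true_and,
    SimpleGraph.top_adj]
  rfl

theorem edgeCount_eq (i : Fin 2) :
    edgeCount ⊤ (lab m) i = (Gi m i).edgeFinset.card := by
  unfold edgeCount
  congr 1
  ext e
  induction e with
  | _ u v =>
    simp only [Finset.mem_filter, SimpleGraph.mem_edgeFinset, SimpleGraph.mem_edgeSet,
      SimpleGraph.top_adj]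
    exact Iff.rfl

theorem two_mul_edgeCount (i : Fin 2) :
    2 * edgeCount ⊤ (lab m) i = ∑ v : Fin (2 * m + 1), (nbr ⊤ (lab m) i v).card := by
  rw [edgeCount_eq i, ← SimpleGraph.sum_degrees_eq_twice_card_edges]
  exact Finset.sum_congr rfl fun v _ => Gi_degree i v

theorem edge_friendly (hm : 3 ≤ m) : EdgeFriendly ⊤ (lab m) := by
  have h1 := two_mul_edgeCount (m := m) 1
  have h0 := two_mul_edgeCount (m := m) 0
  have hS := sum_c_one hm
  have hsum : (∑ v : Fin (2 * m + 1), (nbr ⊤ (lab m) 0 v).card)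
      + (∑ v : Fin (2 * m + 1), (nbr ⊤ (lab m) 1 v).card) = (2 * m + 1) * (2 * m) := by
    rw [← Finset.sum_add_distrib]
    rw [Finset.sum_congr rfl (fun v (_ : v ∈ (univ : Finset (Fin (2 * m + 1)))) =>
      c_zero_add_c_one hm v)]
    rw [Finset.sum_const, Finset.card_univ, Fintype.card_fin, smul_eq_mul]
  have hL1 : L1 m ≤ 1 := by unfold L1; omega
  have hL2 : L2 m ≤ 1 := by unfold L2; omega
  unfold EdgeFriendly
  rw [abs_le]
  have hexp : (2 * m + 1) * (2 * m) = 2 * (2 * m * m) + 2 * m := by ring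
  constructor <;> push_cast <;> omega

theorem not_unlabeled (hm : 3 ≤ m) (v : Fin (2 * m + 1)) : ¬ Unlabeled ⊤ (lab m) v := by
  unfold Unlabeled vertexLabel
  have h1 := c_one_ne hm v
  have h2 := c_zero_add_c_one hm v
  split_ifs with ha hb
  · simp
  · simp
  · exact absurd (by omega : (nbr ⊤ (lab m) 1 v).card = m) h1

end KLR


/-- For every odd `n ≥ 7`, the complete graph `K_n` is
opinionated: some edge-friendly labeling leaves no vertex unlabeled. -/
theorem completeGraph_opinionated (n : ℕ) (hn : 7 ≤ n) (hodd : Odd n) :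
    ∃ f : Sym2 (Fin n) → Fin 2, EdgeFriendly (⊤ : SimpleGraph (Fin n)) f ∧
      ∀ v : Fin n, ¬ Unlabeled (⊤ : SimpleGraph (Fin n)) f v := by
  obtain ⟨m, rfl⟩ : ∃ m, n = 2 * m + 1 := by
    obtain ⟨k, hk⟩ := hodd
    exact ⟨k, by omega⟩
  have hm : 3 ≤ m := by omega
  exact ⟨KLR.lab m, KLR.edge_friendly hm, fun v => KLR.not_unlabeled hm v⟩
end
end

section
/- For every integer n ≥ 3, the cycle C_n is not opinionated; that is, every edge-friendly binary edge labeling of the cycle on n vertices leaves at least one vertex unlabeled under the induced partial vertex labeling. -/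
/-!
Edge-friendly labelings (Krop, Lee, Raridan).  A binary edge labeling of a
graph `G` is `f : Sym2 V → Fin 2` (only its values on edges matter).  For
`i : Fin 2`, `nbr G f i v` is the set `N_i(v)` of neighbors of `v` joined to
`v` by an `i`-edge, `edgeCount G f i` is `e_f(i)`, and `vertexLabel G f v` is
the induced partial vertex label `f⁺(v)` (with `none` meaning unlabeled).
-/

open Finset

attribute [local instance] Classical.propDecidable

noncomputable section

open EdgeLabeling

open Fin.CommRing

section Aux

variable {m : ℕ}

private lemma cycTwoNeZero : (2 : Fin (m + 3)) ≠ 0 := by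
  intro h
  have h2 : ((2 : ℕ) : Fin (m + 3)) = 0 := by push_cast; exact h
  rw [Fin.natCast_eq_zero] at h2
  have := Nat.le_of_dvd (by norm_num) h2
  omega

private lemma pair_ne (v : Fin (m + 3)) : v - 1 ≠ v + 1 := by
  intro h
  apply cycTwoNeZero (m := m)
  calc (2 : Fin (m + 3)) = v + 1 - (v - 1) := by ring
    _ = 0 := by rw [← h, sub_self]

private lemma mem_edgeFinset' {W : Type*} {G : SimpleGraph W} (inst : Fintype G.edgeSet)
    (e : Sym2 W) : e ∈ @SimpleGraph.edgeFinset W G inst ↔ e ∈ G.edgeSet := by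
  letI := inst
  exact Set.mem_toFinset

private lemma adj_iff {v u : Fin (m + 3)} :
    (SimpleGraph.cycleGraph (m + 3)).Adj v u ↔ u = v - 1 ∨ u = v + 1 := by
  rw [SimpleGraph.cycleGraph_adj (n := m + 1)]
  constructor
  · rintro (h | h)
    · left; rw [eq_sub_iff_add_eq, ← h]; ring
    · right; rw [← h]; ring
  · rintro (h | h)
    · left; rw [h]; ring
    · right; rw [h]; ring

private lemma nbr_eq (f : Sym2 (Fin (m + 3)) → Fin 2) (i : Fin 2) (v : Fin (m + 3)) :
    nbr (SimpleGraph.cycleGraph (m + 3)) f i v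
      = ({v - 1, v + 1} : Finset (Fin (m + 3))).filter fun u => f s(v, u) = i := by
  ext u
  simp [nbr, adj_iff, Finset.mem_filter, and_comm, or_and_right]

private lemma unlabeled_of_ne (f : Sym2 (Fin (m + 3)) → Fin 2) (v : Fin (m + 3))
    (h : f s(v, v - 1) ≠ f s(v, v + 1)) :
    Unlabeled (SimpleGraph.cycleGraph (m + 3)) f v := by
  have hpair := pair_ne v
  have hc : ∀ i, (nbr (SimpleGraph.cycleGraph (m + 3)) f i v).card = 1 := by
    intro i
    rw [nbr_eq]
    generalize ha : f s(v, v - 1) = a at h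
    generalize hb : f s(v, v + 1) = b at h
    rw [Finset.filter_insert, Finset.filter_singleton, ha, hb]
    fin_cases a <;> fin_cases b <;> fin_cases i <;> simp_all
  simp [Unlabeled, vertexLabel, hc]

end Aux

/-- For every `n ≥ 3`, the cycle `C_n` is not opinionated:
every edge-friendly labeling of the cycle on `n` vertices leaves at least one
vertex unlabeled. -/
theorem cycleGraph_not_opinionated (n : ℕ) (hn : 3 ≤ n) :
    ¬ Opinionated (SimpleGraph.cycleGraph n) ∧
      ∀ f : Sym2 (Fin n) → Fin 2, EdgeFriendly (SimpleGraph.cycleGraph n) f →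
        ∃ v : Fin n, Unlabeled (SimpleGraph.cycleGraph n) f v := by
  obtain ⟨m, rfl⟩ : ∃ m, n = m + 3 := ⟨n - 3, by omega⟩
  have main : ∀ f : Sym2 (Fin (m + 3)) → Fin 2,
      EdgeFriendly (SimpleGraph.cycleGraph (m + 3)) f →
      ∃ v, Unlabeled (SimpleGraph.cycleGraph (m + 3)) f v := by
    intro f hf
    by_contra hno
    push_neg at hno
    set G := SimpleGraph.cycleGraph (m + 3) with hG
    have hsame : ∀ v : Fin (m + 3), f s(v, v - 1) = f s(v, v + 1) := by
      intro v
      by_contra h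
      exact hno v (unlabeled_of_ne f v h)
    have hstep : ∀ v : Fin (m + 3), f s(v, v + 1) = f s(v + 1, v + 1 + 1) := by
      intro v
      have h := hsame (v + 1)
      rw [add_sub_cancel_right] at h
      rw [← h, Sym2.eq_swap]
    have hconst : ∀ v : Fin (m + 3), f s(v, v + 1) = f s(0, 1) := by
      have hk : ∀ k : ℕ, f s((k : Fin (m + 3)), (k : Fin (m + 3)) + 1) = f s(0, 1) := by
        intro k
        induction k with
        | zero => norm_num
        | succ k ih =>
          push_cast
          rw [← hstep]
          exact ih
      intro v
      have h := hk v.val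
      rwa [Fin.cast_val_eq_self] at h
    have hall : ∀ e ∈ G.edgeSet, f e = f s(0, 1) := by
      intro e he
      induction e with
      | _ u w =>
        rw [SimpleGraph.mem_edgeSet, hG, adj_iff] at he
        rcases he with h | h
        · subst h
          rw [Sym2.eq_swap]
          have h2 := hconst (u - 1)
          rwa [sub_add_cancel] at h2
        · subst h
          exact hconst u
    have hd : ∀ d : Fin 2, d ≠ f s(0, 1) → edgeCount G f d = 0 := by
      intro d hdne
      unfold edgeCount
      rw [Finset.card_eq_zero, Finset.filter_eq_empty_iff]
      intro e he hfe
      exact hdne (hfe ▸ hall e ((mem_edgeFinset' _ _).mp he))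
    have hcard2 : 2 ≤ edgeCount G f (f s(0, 1)) := by
      unfold edgeCount
      refine Finset.one_lt_card.mpr
        ⟨s((0 : Fin (m + 3)), 1), ?_, s((1 : Fin (m + 3)), 2), ?_, ?_⟩
      · refine Finset.mem_filter.mpr ⟨(mem_edgeFinset' _ _).mpr ?_, rfl⟩
        rw [SimpleGraph.mem_edgeSet, hG, adj_iff]
        exact Or.inr (zero_add 1).symm
      · refine Finset.mem_filter.mpr ⟨(mem_edgeFinset' _ _).mpr ?_, ?_⟩
        · rw [SimpleGraph.mem_edgeSet, hG, adj_iff]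
          exact Or.inr one_add_one_eq_two.symm
        · show f s(1, 2) = f s(0, 1)
          rw [show (2 : Fin (m + 3)) = 1 + 1 from one_add_one_eq_two.symm]
          exact hconst 1
      · intro heq
        rw [Sym2.eq_iff] at heq
        rcases heq with ⟨h01, -⟩ | ⟨h02, -⟩
        · exact zero_ne_one h01
        · exact cycTwoNeZero h02.symm
    have hcc : f s((0 : Fin (m + 3)), 1) = 0 ∨ f s((0 : Fin (m + 3)), 1) = 1 := by
      generalize f s((0 : Fin (m + 3)), 1) = c
      have hlt := c.is_lt
      have : c.val = 0 ∨ c.val = 1 := by omega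
      rcases this with h | h
      · exact Or.inl (Fin.ext h)
      · exact Or.inr (Fin.ext h)
    unfold EdgeFriendly at hf
    rcases hcc with h0 | h0
    · rw [h0] at hcard2
      have hz := hd 1 (by rw [h0]; decide)
      rw [hz] at hf
      rw [abs_le] at hf
      obtain ⟨-, hf2⟩ := hf
      have : (2 : ℤ) ≤ (edgeCount G f 0 : ℤ) := by exact_mod_cast hcard2
      omega
    · rw [h0] at hcard2
      have hz := hd 0 (by rw [h0]; decide)
      rw [hz] at hf
      rw [abs_le] at hf
      obtain ⟨hf1, -⟩ := hf
      have : (2 : ℤ) ≤ (edgeCount G f 1 : ℤ) := by exact_mod_cast hcard2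
      omega
  refine ⟨?_, main⟩
  rintro ⟨f, hf, hallv⟩
  obtain ⟨v, hv⟩ := main f hf
  exact hallv v hv
end
end

section
/- For every integer n ≥ 3, the path P_n on n vertices is not opinionated; that is, every edge-friendly binary edge labeling of the path on n vertices leaves at least one vertex unlabeled under the induced partial vertex labeling. -/
/-!
Edge-friendly labelings (Krop, Lee, Raridan).  A binary edge labeling of a
graph `G` is `f : Sym2 V → Fin 2` (only its values on edges matter).  For
`i : Fin 2`, `nbr G f i v` is the set `N_i(v)` of neighbors of `v` joined to
`v` by an `i`-edge, `edgeCount G f i` is `e_f(i)`, and `vertexLabel G f v` is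
the induced partial vertex label `f⁺(v)` (with `none` meaning unlabeled).
-/

open Finset

attribute [local instance] Classical.propDecidable

noncomputable section

open EdgeLabeling

/-- For every `n ≥ 3`, the path `P_n` on `n` vertices is not
opinionated: every edge-friendly labeling of the path leaves at least one
vertex unlabeled. -/
theorem pathGraph_not_opinionated (n : ℕ) (hn : 3 ≤ n) :
    ¬ Opinionated (SimpleGraph.pathGraph n) ∧
      ∀ f : Sym2 (Fin n) → Fin 2, EdgeFriendly (SimpleGraph.pathGraph n) f →
        ∃ v : Fin n, Unlabeled (SimpleGraph.pathGraph n) f v := by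
  set G := SimpleGraph.pathGraph n with hG
  have key : ∀ f : Sym2 (Fin n) → Fin 2, EdgeFriendly G f →
      ∃ v : Fin n, Unlabeled G f v := by
    intro f hf
    by_contra hno
    push_neg at hno
    have two_cases : ∀ x : Fin 2, x = 0 ∨ x = 1 := by decide
    -- interior lemma
    have hB : ∀ (v a b : Fin n), (∀ u, G.Adj v u ↔ u = a ∨ u = b) →
        f s(v, a) = f s(v, b) := by
      intro v a b hadj
      by_contra hne
      have hab : a ≠ b := by
        intro h; rw [h] at hne; exact hne rfl
      have hnbr : ∀ i : Fin 2, f s(v, a) = i → f s(v, b) ≠ i →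
          nbr G f i v = {a} := by
        intro i hia hib
        ext u
        simp only [nbr, Finset.mem_filter, Finset.mem_univ, true_and,
          Finset.mem_singleton, hadj u]
        constructor
        · rintro ⟨hu | hu, hfi⟩
          · exact hu
          · exact absurd (hu ▸ hfi) hib
        · rintro rfl
          exact ⟨Or.inl rfl, hia⟩
      have hnbr' : ∀ i : Fin 2, f s(v, b) = i → f s(v, a) ≠ i →
          nbr G f i v = {b} := by
        intro i hib hia
        ext u
        simp only [nbr, Finset.mem_filter, Finset.mem_univ, true_and,
          Finset.mem_singleton, hadj u]
        constructor
        · rintro ⟨hu | hu, hfi⟩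
          · exact absurd (hu ▸ hfi) hia
          · exact hu
        · rintro rfl
          exact ⟨Or.inr rfl, hib⟩
      have hi := two_cases (f s(v, a))
      have hj := two_cases (f s(v, b))
      have h01 : (nbr G f 0 v).card = 1 ∧ (nbr G f 1 v).card = 1 := by
        rcases hi with hi | hi <;> rcases hj with hj | hj
        · exact absurd (hi.trans hj.symm) hne
        · refine ⟨?_, ?_⟩
          · rw [hnbr 0 hi (by rw [hj]; decide)]; simp
          · rw [hnbr' 1 hj (by rw [hi]; decide)]; simp
        · refine ⟨?_, ?_⟩
          · rw [hnbr' 0 hj (by rw [hi]; decide)]; simp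
          · rw [hnbr 1 hi (by rw [hj]; decide)]; simp
        · exact absurd (hi.trans hj.symm) hne
      have := hno v
      simp [Unlabeled, vertexLabel, h01.1, h01.2] at this
    -- all edges have the same label
    have step : ∀ k (hk : k + 2 < n),
        f s(⟨k, by omega⟩, ⟨k + 1, by omega⟩) = f s(⟨k + 1, by omega⟩, ⟨k + 2, by omega⟩) := by
      intro k hk
      have h := hB ⟨k + 1, by omega⟩ ⟨k, by omega⟩ ⟨k + 2, by omega⟩ ?_
      · rw [Sym2.eq_swap] at h
        exact h
      · intro u
        rw [hG, SimpleGraph.pathGraph_adj]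
        simp only [Fin.ext_iff, Fin.val_mk]
        omega
    have all : ∀ k (h : k + 1 < n),
        f s(⟨k, by omega⟩, ⟨k + 1, h⟩) = f s(⟨0, by omega⟩, ⟨1, by omega⟩) := by
      intro k
      induction k with
      | zero => intro h; rfl
      | succ m ih =>
        intro h
        rw [← step m (by omega)]
        exact ih (by omega)
    obtain ⟨c, hc⟩ : ∃ c, f s((⟨0, by omega⟩ : Fin n), ⟨1, by omega⟩) = c := ⟨_, rfl⟩
    have hall : ∀ e ∈ G.edgeFinset, f e = c := by
      intro e he
      rw [SimpleGraph.mem_edgeFinset] at he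
      induction e with
      | _ u v =>
        have hadj : G.Adj u v := he
        rw [hG, SimpleGraph.pathGraph_adj] at hadj
        rcases hadj with h | h
        · have hu : u = ⟨u.val, u.isLt⟩ := rfl
          have hv : v = ⟨u.val + 1, by omega⟩ := by
            apply Fin.ext; simp only [Fin.val_mk]; omega
          rw [hu, hv]
          exact (all u.val (by omega)).trans hc
        · have hv : v = ⟨v.val, v.isLt⟩ := rfl
          have hu : u = ⟨v.val + 1, by omega⟩ := by
            apply Fin.ext; simp only [Fin.val_mk]; omega
          rw [Sym2.eq_swap, hv, hu]
          exact (all v.val (by omega)).trans hc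
    -- two distinct edges labeled c
    have he1 : s((⟨0, by omega⟩ : Fin n), ⟨1, by omega⟩) ∈ G.edgeFinset := by
      rw [SimpleGraph.mem_edgeFinset]
      rw [hG]
      exact SimpleGraph.pathGraph_adj.2 (Or.inl rfl)
    have he2 : s((⟨1, by omega⟩ : Fin n), ⟨2, by omega⟩) ∈ G.edgeFinset := by
      rw [SimpleGraph.mem_edgeFinset]
      rw [hG]
      exact SimpleGraph.pathGraph_adj.2 (Or.inl rfl)
    have hne12 : s((⟨0, by omega⟩ : Fin n), ⟨1, by omega⟩) ≠
        s((⟨1, by omega⟩ : Fin n), ⟨2, by omega⟩) := by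
      intro h
      rw [Sym2.eq_iff] at h
      rcases h with ⟨h1, h2⟩ | ⟨h1, h2⟩ <;> simp only [Fin.mk.injEq] at h1 h2 <;> omega
    have hcard2 : 2 ≤ edgeCount G f c := by
      have hsub : ({s((⟨0, by omega⟩ : Fin n), ⟨1, by omega⟩),
          s((⟨1, by omega⟩ : Fin n), ⟨2, by omega⟩)} : Finset (Sym2 (Fin n))) ⊆
          G.edgeFinset.filter fun e => f e = c := by
        intro e he
        simp only [Finset.mem_insert, Finset.mem_singleton] at he
        rcases he with rfl | rfl <;>
          exact Finset.mem_filter.2 ⟨by assumption, hall _ (by assumption)⟩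
      calc 2 = ({s((⟨0, by omega⟩ : Fin n), ⟨1, by omega⟩),
          s((⟨1, by omega⟩ : Fin n), ⟨2, by omega⟩)} : Finset (Sym2 (Fin n))).card :=
            (Finset.card_pair hne12).symm
        _ ≤ _ := Finset.card_le_card hsub
    have hzero : ∀ c' : Fin 2, c' ≠ c → edgeCount G f c' = 0 := by
      intro c' hc'
      rw [edgeCount, Finset.card_eq_zero, Finset.filter_eq_empty_iff]
      intro e he hfe
      exact hc' (hfe ▸ hall e he)
    rcases two_cases c with hc0 | hc0
    · have h1 := hzero 1 (by rw [hc0]; decide)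
      rw [hc0] at hcard2
      rw [EdgeFriendly, h1, abs_le] at hf
      have h2 : (2 : ℤ) ≤ edgeCount G f 0 := by exact_mod_cast hcard2
      push_cast at hf
      omega
    · have h1 := hzero 0 (by rw [hc0]; decide)
      rw [hc0] at hcard2
      rw [EdgeFriendly, h1, abs_le] at hf
      have h2 : (2 : ℤ) ≤ edgeCount G f 1 := by exact_mod_cast hcard2
      push_cast at hf
      omega
  refine ⟨?_, key⟩
  rintro ⟨f, hf, hv⟩
  obtain ⟨v, hv'⟩ := key f hf
  exact hv v hv'
end
end

section
/- Let f be an edge-friendly binary edge labeling of the complete graph K_n (n ≥ 3), let v be a vertex that is unlabeled under the induced partial vertex labeling, and let u₁, u₂ ∈ N_0(v) with f(u₁u₂) = 1. Suppose |N_0(u₁)| ≥ |N_1(u₁)| + 2. Let g be the labeling obtained from f by switching the labels on the edges vu₂ and u₁u₂ (so g(vu₂) = 1, g(u₁u₂) = 0, and g agrees with f on all other edges). Then g is edge-friendly, g⁺(v) = 1, and g⁺(w) = f⁺(w) for every vertex w ≠ v (in particular, the induced labels of u₁ and u₂ are unchanged). -/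
/-!
Edge-friendly labelings (Krop, Lee, Raridan).  A binary edge labeling of a
graph `G` is `f : Sym2 V → Fin 2` (only its values on edges matter).  For
`i : Fin 2`, `nbr G f i v` is the set `N_i(v)` of neighbors of `v` joined to
`v` by an `i`-edge, `edgeCount G f i` is `e_f(i)`, and `vertexLabel G f v` is
the induced partial vertex label `f⁺(v)` (with `none` meaning unlabeled).
-/

open Finset

attribute [local instance] Classical.propDecidable

noncomputable section

open EdgeLabeling

set_option maxHeartbeats 2000000 in
/-- In `K_n` (`n ≥ 3`), let `f` be edge-friendly, `v`
unlabeled, `u₁, u₂ ∈ N_0(v)` with `f(u₁u₂) = 1`, and suppose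
`|N_0(u₁)| ≥ |N_1(u₁)| + 2`.  Switching the labels on `vu₂` and `u₁u₂` yields
an edge-friendly labeling `g` with `g⁺(v) = 1` and `g⁺(w) = f⁺(w)` for all
`w ≠ v`. -/
theorem switch_labels_vertex_becomes_labeled (n : ℕ) (hn : 3 ≤ n)
    (f : Sym2 (Fin n) → Fin 2) (hf : EdgeFriendly (⊤ : SimpleGraph (Fin n)) f)
    (v u₁ u₂ : Fin n) (hv : Unlabeled (⊤ : SimpleGraph (Fin n)) f v)
    (hu₁ : u₁ ∈ nbr (⊤ : SimpleGraph (Fin n)) f 0 v)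
    (hu₂ : u₂ ∈ nbr (⊤ : SimpleGraph (Fin n)) f 0 v)
    (hne : u₁ ≠ u₂) (h12 : f s(u₁, u₂) = 1)
    (hdeg : (nbr (⊤ : SimpleGraph (Fin n)) f 1 u₁).card + 2 ≤
      (nbr (⊤ : SimpleGraph (Fin n)) f 0 u₁).card)
    (g : Sym2 (Fin n) → Fin 2)
    (hg : g = Function.update (Function.update f s(v, u₂) 1) s(u₁, u₂) 0) :
    EdgeFriendly (⊤ : SimpleGraph (Fin n)) g ∧
      vertexLabel (⊤ : SimpleGraph (Fin n)) g v = some 1 ∧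
      ∀ w : Fin n, w ≠ v →
        vertexLabel (⊤ : SimpleGraph (Fin n)) g w =
          vertexLabel (⊤ : SimpleGraph (Fin n)) f w := by
  subst hg
  set g := Function.update (Function.update f s(v, u₂) 1) s(u₁, u₂) 0 with hgdef
  simp only [nbr, Finset.mem_filter, Finset.mem_univ, true_and,
    SimpleGraph.top_adj] at hu₁ hu₂
  obtain ⟨hvu₁, hfvu₁⟩ := hu₁
  obtain ⟨hvu₂, hfvu₂⟩ := hu₂
  have hgval : ∀ e, g e = if e = s(u₁, u₂) then 0 else if e = s(v, u₂) then 1 else f e := by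
    intro e
    simp only [hgdef, Function.update_apply]
  have hone : (1 : Fin 2) ≠ 0 := by decide
  have hAne : (s(u₁, u₂) : Sym2 (Fin n)) ≠ s(v, u₂) := by
    intro h
    rcases Sym2.eq_iff.mp h with ⟨h1, _⟩ | ⟨h1, _⟩
    · exact hvu₁ h1.symm
    · exact hne h1
  -- characterize membership in nbr of g
  have hmemg : ∀ i (w u : Fin n), u ∈ nbr (⊤ : SimpleGraph (Fin n)) g i w ↔
      w ≠ u ∧ g s(w, u) = i := by
    intro i w u
    simp [nbr]
  have hmemf : ∀ i (w u : Fin n), u ∈ nbr (⊤ : SimpleGraph (Fin n)) f i w ↔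
      w ≠ u ∧ f s(w, u) = i := by
    intro i w u
    simp [nbr]
  -- nbr of v
  have hgv : ∀ u : Fin n, g s(v, u) = if u = u₂ then 1 else f s(v, u) := by
    intro u
    rw [hgval, if_neg (fun h => by
      rcases Sym2.eq_iff.mp h with ⟨h1, _⟩ | ⟨h1, _⟩
      exacts [hvu₁ h1, hvu₂ h1])]
    by_cases hu : u = u₂
    · subst hu; rw [if_pos rfl, if_pos rfl]
    · rw [if_neg (fun h => by
        rcases Sym2.eq_iff.mp h with ⟨_, h2⟩ | ⟨h1, _⟩
        exacts [hu h2, hvu₂ h1]), if_neg hu]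
  have hnv0 : nbr (⊤ : SimpleGraph (Fin n)) g 0 v =
      (nbr (⊤ : SimpleGraph (Fin n)) f 0 v).erase u₂ := by
    ext u
    rw [hmemg, Finset.mem_erase, hmemf, hgv]
    by_cases hu : u = u₂
    · subst hu; simp [hone]
    · rw [if_neg hu]; tauto
  have hnv1 : nbr (⊤ : SimpleGraph (Fin n)) g 1 v =
      insert u₂ (nbr (⊤ : SimpleGraph (Fin n)) f 1 v) := by
    ext u
    rw [hmemg, Finset.mem_insert, hmemf, hgv]
    by_cases hu : u = u₂
    · subst hu; simp [hvu₂]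
    · rw [if_neg hu]; tauto
  have hu₂mem0 : u₂ ∈ nbr (⊤ : SimpleGraph (Fin n)) f 0 v := by
    rw [hmemf]; exact ⟨hvu₂, hfvu₂⟩
  have hu₂nmem1 : u₂ ∉ nbr (⊤ : SimpleGraph (Fin n)) f 1 v := by
    rw [hmemf]
    rintro ⟨-, h⟩
    rw [hfvu₂] at h
    exact hone h.symm
  have hcv0 : (nbr (⊤ : SimpleGraph (Fin n)) g 0 v).card =
      (nbr (⊤ : SimpleGraph (Fin n)) f 0 v).card - 1 := by
    rw [hnv0, Finset.card_erase_of_mem hu₂mem0]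
  have hcv1 : (nbr (⊤ : SimpleGraph (Fin n)) g 1 v).card =
      (nbr (⊤ : SimpleGraph (Fin n)) f 1 v).card + 1 := by
    rw [hnv1, Finset.card_insert_of_notMem hu₂nmem1]
  have hcv0pos : 0 < (nbr (⊤ : SimpleGraph (Fin n)) f 0 v).card :=
    Finset.card_pos.mpr ⟨u₂, hu₂mem0⟩
  have hveq : (nbr (⊤ : SimpleGraph (Fin n)) f 0 v).card =
      (nbr (⊤ : SimpleGraph (Fin n)) f 1 v).card := by
    unfold Unlabeled vertexLabel at hv
    split_ifs at hv with h1 h2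
    omega
  refine ⟨?_, ?_, ?_⟩
  · -- edge friendliness: edge counts are unchanged
    have hEmemA : (s(u₁, u₂) : Sym2 (Fin n)) ∈ (⊤ : SimpleGraph (Fin n)).edgeFinset := by
      simpa [SimpleGraph.mem_edgeFinset] using hne
    have hEmemB : (s(v, u₂) : Sym2 (Fin n)) ∈ (⊤ : SimpleGraph (Fin n)).edgeFinset := by
      simpa [SimpleGraph.mem_edgeFinset] using hvu₂
    have hc0 : edgeCount (⊤ : SimpleGraph (Fin n)) g 0 =
        edgeCount (⊤ : SimpleGraph (Fin n)) f 0 := by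
      unfold edgeCount
      have hset : ((⊤ : SimpleGraph (Fin n)).edgeFinset.filter fun e => g e = 0) =
          insert s(u₁, u₂) (((⊤ : SimpleGraph (Fin n)).edgeFinset.filter
            fun e => f e = 0).erase s(v, u₂)) := by
        ext e
        rw [Finset.mem_filter, Finset.mem_insert, Finset.mem_erase, Finset.mem_filter, hgval]
        by_cases hA : e = s(u₁, u₂)
        · subst hA; simp [hEmemA, hne]
        · rw [if_neg hA]
          by_cases hB : e = s(v, u₂)
          · subst hB; simp [hA, hone]
          · rw [if_neg hB]; tauto
      have hBmem : (s(v, u₂) : Sym2 (Fin n)) ∈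
          ((⊤ : SimpleGraph (Fin n)).edgeFinset.filter fun e => f e = 0) := by
        rw [Finset.mem_filter]; exact ⟨hEmemB, hfvu₂⟩
      have hAnmem : (s(u₁, u₂) : Sym2 (Fin n)) ∉
          (((⊤ : SimpleGraph (Fin n)).edgeFinset.filter fun e => f e = 0).erase s(v, u₂)) := by
        rw [Finset.mem_erase, Finset.mem_filter]
        rintro ⟨-, -, h⟩
        rw [h12] at h
        exact hone h
      have hcards : ((⊤ : SimpleGraph (Fin n)).edgeFinset.filter fun e => g e = 0).card =
          ((⊤ : SimpleGraph (Fin n)).edgeFinset.filter fun e => f e = 0).card := by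
        rw [hset, Finset.card_insert_of_notMem hAnmem, Finset.card_erase_of_mem hBmem]
        have := Finset.card_pos.mpr ⟨_, hBmem⟩
        omega
      convert hcards using 4
    have hc1 : edgeCount (⊤ : SimpleGraph (Fin n)) g 1 =
        edgeCount (⊤ : SimpleGraph (Fin n)) f 1 := by
      unfold edgeCount
      have hset : ((⊤ : SimpleGraph (Fin n)).edgeFinset.filter fun e => g e = 1) =
          insert s(v, u₂) (((⊤ : SimpleGraph (Fin n)).edgeFinset.filter
            fun e => f e = 1).erase s(u₁, u₂)) := by
        ext e
        rw [Finset.mem_filter, Finset.mem_insert, Finset.mem_erase, Finset.mem_filter, hgval]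
        by_cases hA : e = s(u₁, u₂)
        · subst hA; simp [hAne, hone]
        · rw [if_neg hA]
          by_cases hB : e = s(v, u₂)
          · subst hB; simp [hEmemB, hvu₂]
          · rw [if_neg hB]; tauto
      have hAmem : (s(u₁, u₂) : Sym2 (Fin n)) ∈
          ((⊤ : SimpleGraph (Fin n)).edgeFinset.filter fun e => f e = 1) := by
        rw [Finset.mem_filter]; exact ⟨hEmemA, h12⟩
      have hBnmem : (s(v, u₂) : Sym2 (Fin n)) ∉
          (((⊤ : SimpleGraph (Fin n)).edgeFinset.filter fun e => f e = 1).erase s(u₁, u₂)) := by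
        rw [Finset.mem_erase, Finset.mem_filter]
        rintro ⟨-, -, h⟩
        rw [hfvu₂] at h
        exact hone h.symm
      have hcards : ((⊤ : SimpleGraph (Fin n)).edgeFinset.filter fun e => g e = 1).card =
          ((⊤ : SimpleGraph (Fin n)).edgeFinset.filter fun e => f e = 1).card := by
        rw [hset, Finset.card_insert_of_notMem hBnmem, Finset.card_erase_of_mem hAmem]
        have := Finset.card_pos.mpr ⟨_, hAmem⟩
        omega
      convert hcards using 4
    unfold EdgeFriendly
    rw [hc0, hc1]
    exact hf
  · -- g⁺(v) = 1
    unfold vertexLabel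
    rw [if_neg (by omega), if_pos (by omega)]
  · -- other vertices keep their labels
    intro w hwv
    by_cases hw1 : w = u₁
    · rw [hw1]
      have hgw : ∀ u : Fin n, g s(u₁, u) = if u = u₂ then 0 else f s(u₁, u) := by
        intro u
        rw [hgval]
        by_cases hu : u = u₂
        · subst hu; simp
        · rw [if_neg (fun h => by
            rcases Sym2.eq_iff.mp h with ⟨_, h2⟩ | ⟨h1, _⟩
            exacts [hu h2, hne h1]), if_neg (fun h => by
            rcases Sym2.eq_iff.mp h with ⟨h1, _⟩ | ⟨h1, _⟩
            exacts [hvu₁ h1.symm, hne h1]), if_neg hu]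
      have hn0 : nbr (⊤ : SimpleGraph (Fin n)) g 0 u₁ =
          insert u₂ (nbr (⊤ : SimpleGraph (Fin n)) f 0 u₁) := by
        ext u
        rw [hmemg, Finset.mem_insert, hmemf, hgw]
        by_cases hu : u = u₂
        · subst hu; simp [hne]
        · rw [if_neg hu]; tauto
      have hn1 : nbr (⊤ : SimpleGraph (Fin n)) g 1 u₁ =
          (nbr (⊤ : SimpleGraph (Fin n)) f 1 u₁).erase u₂ := by
        ext u
        rw [hmemg, Finset.mem_erase, hmemf, hgw]
        by_cases hu : u = u₂
        · subst hu; simp [hone]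
        · rw [if_neg hu]; tauto
      have hmem1 : u₂ ∈ nbr (⊤ : SimpleGraph (Fin n)) f 1 u₁ := by
        rw [hmemf]; exact ⟨hne, h12⟩
      have hnmem0 : u₂ ∉ nbr (⊤ : SimpleGraph (Fin n)) f 0 u₁ := by
        rw [hmemf]
        rintro ⟨-, h⟩
        rw [h12] at h
        exact hone h
      have hc0' : (nbr (⊤ : SimpleGraph (Fin n)) g 0 u₁).card =
          (nbr (⊤ : SimpleGraph (Fin n)) f 0 u₁).card + 1 := by
        rw [hn0, Finset.card_insert_of_notMem hnmem0]
      have hc1' : (nbr (⊤ : SimpleGraph (Fin n)) g 1 u₁).card =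
          (nbr (⊤ : SimpleGraph (Fin n)) f 1 u₁).card - 1 := by
        rw [hn1, Finset.card_erase_of_mem hmem1]
      unfold vertexLabel
      rw [if_pos (show (nbr (⊤ : SimpleGraph (Fin n)) g 1 u₁).card <
            (nbr (⊤ : SimpleGraph (Fin n)) g 0 u₁).card by omega),
        if_pos (show (nbr (⊤ : SimpleGraph (Fin n)) f 1 u₁).card <
            (nbr (⊤ : SimpleGraph (Fin n)) f 0 u₁).card by omega)]
    · by_cases hw2 : w = u₂
      · rw [hw2]
        have hgw : ∀ u : Fin n, g s(u₂, u) =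
            if u = u₁ then 0 else if u = v then 1 else f s(u₂, u) := by
          intro u
          rw [hgval]
          by_cases hu : u = u₁
          · subst hu
            rw [if_pos, if_pos rfl]
            rw [Sym2.eq_iff]
            right; exact ⟨rfl, rfl⟩
          · rw [if_neg, if_neg hu]
            · by_cases huv : u = v
              · subst huv
                rw [if_pos, if_pos rfl]
                rw [Sym2.eq_iff]
                right; exact ⟨rfl, rfl⟩
              · rw [if_neg, if_neg huv]
                intro h
                rcases Sym2.eq_iff.mp h with ⟨h1, h2⟩ | ⟨h1, h2⟩
                · exact hvu₂ h1.symm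
                · exact huv h2
            · intro h
              rcases Sym2.eq_iff.mp h with ⟨h1, h2⟩ | ⟨h1, h2⟩
              · exact hne h1.symm
              · exact hu h2
        have hf2v : f s(u₂, v) = 0 := by rw [Sym2.eq_swap]; exact hfvu₂
        have hf21 : f s(u₂, u₁) = 1 := by rw [Sym2.eq_swap]; exact h12
        have hn0 : nbr (⊤ : SimpleGraph (Fin n)) g 0 u₂ =
            insert u₁ ((nbr (⊤ : SimpleGraph (Fin n)) f 0 u₂).erase v) := by
          ext u
          rw [hmemg, Finset.mem_insert, Finset.mem_erase, hmemf, hgw]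
          by_cases hu : u = u₁
          · subst hu; simp [Ne.symm hne]
          · rw [if_neg hu]
            by_cases huv : u = v
            · subst huv; simp [hu, hone]
            · rw [if_neg huv]; tauto
        have hn1 : nbr (⊤ : SimpleGraph (Fin n)) g 1 u₂ =
            insert v ((nbr (⊤ : SimpleGraph (Fin n)) f 1 u₂).erase u₁) := by
          ext u
          rw [hmemg, Finset.mem_insert, Finset.mem_erase, hmemf, hgw]
          by_cases hu : u = u₁
          · subst hu; simp [hone, Ne.symm hvu₁]
          · rw [if_neg hu]
            by_cases huv : u = v
            · subst huv; simp [Ne.symm hvu₂]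
            · rw [if_neg huv]; tauto
        have hvmem0 : v ∈ nbr (⊤ : SimpleGraph (Fin n)) f 0 u₂ := by
          rw [hmemf]; exact ⟨Ne.symm hvu₂, hf2v⟩
        have hu₁mem1 : u₁ ∈ nbr (⊤ : SimpleGraph (Fin n)) f 1 u₂ := by
          rw [hmemf]; exact ⟨Ne.symm hne, hf21⟩
        have hu₁nmem : u₁ ∉ (nbr (⊤ : SimpleGraph (Fin n)) f 0 u₂).erase v := by
          rw [Finset.mem_erase, hmemf]
          rintro ⟨-, -, h⟩
          rw [hf21] at h
          exact hone h
        have hvnmem : v ∉ (nbr (⊤ : SimpleGraph (Fin n)) f 1 u₂).erase u₁ := by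
          rw [Finset.mem_erase, hmemf]
          rintro ⟨-, -, h⟩
          rw [hf2v] at h
          exact hone h.symm
        have hc0' : (nbr (⊤ : SimpleGraph (Fin n)) g 0 u₂).card =
            (nbr (⊤ : SimpleGraph (Fin n)) f 0 u₂).card := by
          rw [hn0, Finset.card_insert_of_notMem hu₁nmem, Finset.card_erase_of_mem hvmem0]
          have := Finset.card_pos.mpr ⟨_, hvmem0⟩
          omega
        have hc1' : (nbr (⊤ : SimpleGraph (Fin n)) g 1 u₂).card =
            (nbr (⊤ : SimpleGraph (Fin n)) f 1 u₂).card := by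
          rw [hn1, Finset.card_insert_of_notMem hvnmem, Finset.card_erase_of_mem hu₁mem1]
          have := Finset.card_pos.mpr ⟨_, hu₁mem1⟩
          omega
        unfold vertexLabel
        rw [hc0', hc1']
      · -- w not among v, u₁, u₂
        have hnbr : ∀ i, nbr (⊤ : SimpleGraph (Fin n)) g i w =
            nbr (⊤ : SimpleGraph (Fin n)) f i w := by
          intro i
          ext u
          rw [hmemg, hmemf, hgval, if_neg, if_neg]
          · intro h
            rcases Sym2.eq_iff.mp h with ⟨h1, h2⟩ | ⟨h1, h2⟩
            · exact hwv h1
            · exact hw2 h1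
          · intro h
            rcases Sym2.eq_iff.mp h with ⟨h1, h2⟩ | ⟨h1, h2⟩
            · exact hw1 h1
            · exact hw2 h1
        unfold vertexLabel
        rw [hnbr 0, hnbr 1]
end
end

section
/- Let n ≥ 9 be an integer with n ≡ 1 (mod 4), let f be an edge-friendly binary edge labeling of the complete graph K_n, and let v be a vertex that is unlabeled under the induced partial vertex labeling. If every vertex of N_0(v) has at most one 0-edge to a vertex of N_1(v), then there is at least one 0-edge joining two vertices of N_1(v); indeed, the number of 0-edges with both endpoints in N_1(v) is at least C(n,2)/2 − C((n−1)/2, 2) − (n−1)/2 − (n−1)/2 ≥ 1. -/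
/-!
Edge-friendly labelings (Krop, Lee, Raridan).  A binary edge labeling of a
graph `G` is `f : Sym2 V → Fin 2` (only its values on edges matter).  For
`i : Fin 2`, `nbr G f i v` is the set `N_i(v)` of neighbors of `v` joined to
`v` by an `i`-edge, `edgeCount G f i` is `e_f(i)`, and `vertexLabel G f v` is
the induced partial vertex label `f⁺(v)` (with `none` meaning unlabeled).
-/

open Finset

attribute [local instance] Classical.propDecidable

noncomputable section

open EdgeLabeling

namespace EdgeLabeling

variable {V : Type*} [Fintype V]

/-- The number of edges of `G` labeled `i` with both endpoints in `S`. -/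
def edgesWithin (G : SimpleGraph V) (f : Sym2 V → Fin 2) (i : Fin 2)
    (S : Finset V) : ℕ :=
  (G.edgeFinset.filter fun e => f e = i ∧ ∃ x ∈ S, ∃ y ∈ S, e = s(x, y)).card

/-- The number of edges of `G` labeled `i` with one endpoint in `S` and the
other in `T`. -/
def edgesBetween (G : SimpleGraph V) (f : Sym2 V → Fin 2) (i : Fin 2)
    (S T : Finset V) : ℕ :=
  (G.edgeFinset.filter fun e => f e = i ∧ ∃ x ∈ S, ∃ y ∈ T, e = s(x, y)).card

/-- The number of edges of `G` labeled `i` incident with the vertex `v`. -/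
def edgesIncident (G : SimpleGraph V) (f : Sym2 V → Fin 2) (i : Fin 2)
    (v : V) : ℕ :=
  (G.edgeFinset.filter fun e => f e = i ∧ v ∈ e).card

end EdgeLabeling

lemma fin2_filter_card_aux {α : Type*} (s : Finset α) (g : α → Fin 2)
    [DecidablePred fun e => g e = 0] [DecidablePred fun e => g e = 1] :
    (s.filter fun e => g e = 0).card + (s.filter fun e => g e = 1).card = s.card := by
  have h1 : s.filter (fun e => g e = 1) = s.filter (fun e => ¬ g e = 0) := by
    ext a
    simp only [Finset.mem_filter, and_congr_right_iff]
    intro _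
    constructor
    · intro h h0; rw [h0] at h; exact absurd h (by decide)
    · intro h
      rcases (by decide : ∀ x : Fin 2, x = 0 ∨ x = 1) (g a) with h0 | h1
      · exact absurd h0 h
      · exact h1
  rw [h1]
  exact Finset.card_filter_add_card_filter_not ..

/-- For `n ≥ 9` with `n ≡ 1 (mod 4)`, if `f` is an
edge-friendly labeling of `K_n`, `v` is unlabeled, and every vertex of
`N_0(v)` has at most one `0`-edge to `N_1(v)`, then the number of `0`-edges
inside `N_1(v)` is at least
`C(n,2)/2 - C((n-1)/2, 2) - (n-1)/2 - (n-1)/2 ≥ 1`. -/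
theorem zero_edges_in_N1_mod_one (n : ℕ) (hn : 9 ≤ n) (hmod : n % 4 = 1)
    (f : Sym2 (Fin n) → Fin 2) (hf : EdgeFriendly (⊤ : SimpleGraph (Fin n)) f)
    (v : Fin n) (hv : Unlabeled (⊤ : SimpleGraph (Fin n)) f v)
    (hfew : ∀ u ∈ nbr (⊤ : SimpleGraph (Fin n)) f 0 v,
      ((nbr (⊤ : SimpleGraph (Fin n)) f 1 v).filter
        fun w => f s(u, w) = 0).card ≤ 1) :
    1 ≤ n.choose 2 / 2 - ((n - 1) / 2).choose 2 - (n - 1) / 2 - (n - 1) / 2 ∧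
      n.choose 2 / 2 - ((n - 1) / 2).choose 2 - (n - 1) / 2 - (n - 1) / 2 ≤
        edgesWithin (⊤ : SimpleGraph (Fin n)) f 0
          (nbr (⊤ : SimpleGraph (Fin n)) f 1 v) := by
  classical
  set A := nbr (⊤ : SimpleGraph (Fin n)) f 0 v with hA
  set B := nbr (⊤ : SimpleGraph (Fin n)) f 1 v with hB
  have hfin2 : ∀ x : Fin 2, x = 0 ∨ x = 1 := by decide
  have bridge : ∀ (i1 i2 : Fintype (⊤ : SimpleGraph (Fin n)).edgeSet)
      (e : Sym2 (Fin n)), e ∈ @SimpleGraph.edgeFinset (Fin n) ⊤ i1 →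
      e ∈ @SimpleGraph.edgeFinset (Fin n) ⊤ i2 := by
    intro i1 i2 e h
    cases Subsingleton.elim i1 i2
    exact h
  have hmemA : ∀ u, u ∈ A ↔ (u ≠ v ∧ f s(v, u) = 0) := by
    intro u
    simp only [hA, nbr, Finset.mem_filter, Finset.mem_univ, true_and,
      SimpleGraph.top_adj]
    exact and_congr_left' ⟨fun h => h.symm, fun h => h.symm⟩
  have hmemB : ∀ u, u ∈ B ↔ (u ≠ v ∧ f s(v, u) = 1) := by
    intro u
    simp only [hB, nbr, Finset.mem_filter, Finset.mem_univ, true_and,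
      SimpleGraph.top_adj]
    exact and_congr_left' ⟨fun h => h.symm, fun h => h.symm⟩
  have hdisj : Disjoint A B := by
    rw [Finset.disjoint_left]
    intro u hu1 hu2
    have h1 := (hmemA u).mp hu1
    have h2 := (hmemB u).mp hu2
    rw [h1.2] at h2
    exact absurd h2.2 (by decide)
  have hunion : A ∪ B = Finset.univ.erase v := by
    ext u
    simp only [Finset.mem_union, Finset.mem_erase, Finset.mem_univ, and_true,
      hmemA, hmemB]
    constructor
    · rintro (⟨h, -⟩ | ⟨h, -⟩) <;> exact h
    · intro h
      rcases hfin2 (f s(v, u)) with h0 | h1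
      · exact Or.inl ⟨h, h0⟩
      · exact Or.inr ⟨h, h1⟩
  have hcardAB : A.card + B.card = n - 1 := by
    rw [← Finset.card_union_of_disjoint hdisj, hunion,
      Finset.card_erase_of_mem (Finset.mem_univ v)]
    simp
  have hABeq : A.card = B.card := by
    by_contra hne
    rw [Unlabeled, vertexLabel, ← hA, ← hB] at hv
    rcases Nat.lt_or_ge B.card A.card with h | h
    · rw [if_pos h] at hv; exact absurd hv (Option.some_ne_none _)
    · have h' : A.card < B.card := by omega
      rw [if_neg (by omega), if_pos h'] at hv; exact absurd hv (Option.some_ne_none _)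
  -- arithmetic setup
  obtain ⟨k, hk⟩ : ∃ k, n = 4 * k + 1 := ⟨n / 4, by omega⟩
  have hk2 : 2 ≤ k := by omega
  obtain ⟨Z, hZeq⟩ : ∃ Z, Z = k * k := ⟨_, rfl⟩
  have hZk : 2 * k ≤ Z := by
    rw [hZeq]; exact Nat.mul_le_mul_right k hk2
  have hhalf : (n - 1) / 2 = 2 * k := by omega
  have hAcard : A.card = 2 * k := by omega
  have hBcard : B.card = 2 * k := by omega
  have hP : n.choose 2 = 8 * Z + 2 * k := by
    rw [hk, Nat.choose_two_right, hZeq]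
    have h2 : (4 * k + 1) * (4 * k + 1 - 1) = 2 * (8 * (k * k) + 2 * k) := by
      have h1 : 4 * k + 1 - 1 = 4 * k := by omega
      rw [h1]; ring
    rw [h2]
    exact Nat.mul_div_cancel_left _ (by norm_num)
  have hQ : (2 * k).choose 2 = 2 * Z - k := by
    rw [Nat.choose_two_right, hZeq]
    have hzk : k ≤ 2 * (k * k) := by nlinarith
    have h2 : 2 * k * (2 * k - 1) = 2 * (2 * (k * k) - k) := by
      have h1 : 2 * k - 1 + 1 = 2 * k := by omega
      have h3 : 2 * k * (2 * k - 1) + 2 * k = 2 * (2 * (k * k) - k) + 2 * k := by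
        have h4 : 2 * k * (2 * k - 1) + 2 * k = 2 * k * ((2 * k - 1) + 1) := by ring
        rw [h4, h1]
        have h5 : 2 * (2 * (k * k) - k) + 2 * k = 2 * (2 * (k * k) - k + k) := by ring
        rw [h5, Nat.sub_add_cancel hzk]
        ring
      omega
    rw [h2]
    exact Nat.mul_div_cancel_left _ (by norm_num)
  -- edge counts
  have hcardE : (⊤ : SimpleGraph (Fin n)).edgeFinset.card = n.choose 2 := by
    rw [SimpleGraph.card_edgeFinset_top_eq_card_choose_two, Fintype.card_fin]
  have hsplit : edgeCount (⊤ : SimpleGraph (Fin n)) f 0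
      + edgeCount (⊤ : SimpleGraph (Fin n)) f 1 = n.choose 2 := by
    rw [edgeCount, edgeCount, fin2_filter_card_aux _ f]
    have h2 := SimpleGraph.card_edgeFinset_top_eq_card_choose_two (V := Fin n)
    rw [Fintype.card_fin] at h2
    convert h2 using 2
    ext e
    simp [SimpleGraph.mem_edgeFinset]
  have he0 : edgeCount (⊤ : SimpleGraph (Fin n)) f 0 = 4 * Z + k := by
    rw [EdgeFriendly, abs_le] at hf
    omega
  -- the four classes of 0-edges
  set E0 := (⊤ : SimpleGraph (Fin n)).edgeFinset.filter (fun e => f e = 0) with hE0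
  have hE0card : E0.card = edgeCount (⊤ : SimpleGraph (Fin n)) f 0 := by
    rw [hE0, edgeCount]
    congr 1
    ext e
    simp only [Finset.mem_filter]
    constructor <;>
      exact fun ⟨h, h'⟩ =>
        ⟨bridge _ _ _ h, h'⟩
  have hmemAB : ∀ u : Fin n, u ≠ v → u ∈ A ∨ u ∈ B := by
    intro u hu
    have : u ∈ A ∪ B := by
      rw [hunion]; exact Finset.mem_erase.mpr ⟨hu, Finset.mem_univ u⟩
    exact Finset.mem_union.mp this
  have hadj_ne : ∀ x y : Fin n, s(x, y) ∈ (⊤ : SimpleGraph (Fin n)).edgeFinset →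
      x ≠ y := by
    intro x y hxy
    rw [SimpleGraph.mem_edgeFinset, SimpleGraph.mem_edgeSet] at hxy
    exact hxy.ne
  set SI := E0.filter (fun e => v ∈ e) with hSI
  set S0 := E0.filter (fun e => ∃ x ∈ A, ∃ y ∈ A, e = s(x, y)) with hS0
  set SB := E0.filter (fun e => ∃ x ∈ A, ∃ y ∈ B, e = s(x, y)) with hSB
  set S1 := E0.filter (fun e => ∃ x ∈ B, ∃ y ∈ B, e = s(x, y)) with hS1
  have hsubset : E0 ⊆ SI ∪ (S0 ∪ (SB ∪ S1)) := by
    intro e he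
    induction e using Sym2.ind with
    | _ x y =>
      have hne : x ≠ y := hadj_ne x y (Finset.mem_filter.mp he).1
      simp only [hSI, hS0, hSB, hS1, Finset.mem_union, Finset.mem_filter]
      by_cases hx : x = v
      · exact Or.inl ⟨he, by rw [hx]; exact Sym2.mem_mk_left v y⟩
      by_cases hy : y = v
      · exact Or.inl ⟨he, by rw [hy]; exact Sym2.mem_mk_right x v⟩
      rcases hmemAB x hx with hxA | hxB <;> rcases hmemAB y hy with hyA | hyB
      · exact Or.inr (Or.inl ⟨he, x, hxA, y, hyA, rfl⟩)
      · exact Or.inr (Or.inr (Or.inl ⟨he, x, hxA, y, hyB, rfl⟩))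
      · exact Or.inr (Or.inr (Or.inl ⟨he, y, hyA, x, hxB, Sym2.eq_swap⟩))
      · exact Or.inr (Or.inr (Or.inr ⟨he, x, hxB, y, hyB, rfl⟩))
  have hcard_chain : E0.card ≤ SI.card + (S0.card + (SB.card + S1.card)) := by
    calc E0.card ≤ (SI ∪ (S0 ∪ (SB ∪ S1))).card := Finset.card_le_card hsubset
      _ ≤ SI.card + (S0 ∪ (SB ∪ S1)).card := Finset.card_union_le _ _
      _ ≤ SI.card + (S0.card + (SB ∪ S1).card) :=
          Nat.add_le_add_left (Finset.card_union_le _ _) _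
      _ ≤ SI.card + (S0.card + (SB.card + S1.card)) :=
          Nat.add_le_add_left (Nat.add_le_add_left (Finset.card_union_le _ _) _) _
  -- SI has exactly A.card elements
  have hSIcard : SI.card = A.card := by
    symm
    apply Finset.card_bij (fun u _ => s(v, u))
    · intro u hu
      obtain ⟨huv, hu0⟩ := (hmemA u).mp hu
      rw [hSI, Finset.mem_filter, hE0, Finset.mem_filter]
      refine ⟨⟨?_, hu0⟩, Sym2.mem_mk_left v u⟩
      rw [SimpleGraph.mem_edgeFinset, SimpleGraph.mem_edgeSet, SimpleGraph.top_adj]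
      exact fun h => huv h.symm
    · intro u1 h1 u2 h2 heq
      rcases Sym2.eq_iff.mp heq with ⟨-, h⟩ | ⟨h1', h2'⟩
      · exact h
      · exact absurd h2' ((hmemA u1).mp h1).1
    · intro e he
      rw [hSI, Finset.mem_filter] at he
      obtain ⟨he0, hve⟩ := he
      obtain ⟨w, rfl⟩ := Sym2.mem_iff_exists.mp hve
      refine ⟨w, ?_, rfl⟩
      rw [hE0, Finset.mem_filter, SimpleGraph.mem_edgeFinset,
        SimpleGraph.mem_edgeSet, SimpleGraph.top_adj] at he0
      exact (hmemA w).mpr ⟨Ne.symm he0.1, he0.2⟩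
  -- S0 injects into sym2 of A minus diagonal
  have hS0card : S0.card ≤ A.card.choose 2 := by
    have hsub : S0 ∪ A.image Sym2.diag ⊆ A.sym2 := by
      intro e he
      rcases Finset.mem_union.mp he with he | he
      · rw [hS0, Finset.mem_filter] at he
        obtain ⟨-, x, hx, y, hy, rfl⟩ := he
        exact Finset.mk_mem_sym2_iff.mpr ⟨hx, hy⟩
      · obtain ⟨u, hu, rfl⟩ := Finset.mem_image.mp he
        exact Finset.mk_mem_sym2_iff.mpr ⟨hu, hu⟩
    have hdisj2 : Disjoint S0 (A.image Sym2.diag) := by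
      rw [Finset.disjoint_left]
      intro e he1 he2
      obtain ⟨u, -, rfl⟩ := Finset.mem_image.mp he2
      have hmem := (Finset.mem_filter.mp ((Finset.mem_filter.mp he1).1)).1
      rw [SimpleGraph.mem_edgeFinset] at hmem
      exact SimpleGraph.not_isDiag_of_mem_edgeSet _ hmem (Sym2.diag_isDiag u)
    have hle := Finset.card_le_card hsub
    rw [Finset.card_union_of_disjoint hdisj2,
      Finset.card_image_of_injective _ Sym2.diag_injective, Finset.card_sym2] at hle
    have hch : (A.card + 1).choose 2 = A.card.choose 2 + A.card := by
      rw [show (2 : ℕ) = 1 + 1 from rfl, Nat.choose_succ_succ, Nat.choose_one_right]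
      exact Nat.add_comm _ _
    rw [hch] at hle
    exact Nat.le_of_add_le_add_right hle
  -- SB has at most A.card elements
  have hSBcard : SB.card ≤ A.card := by
    have hsub : SB ⊆ A.biUnion fun u =>
        (B.filter fun w => f s(u, w) = 0).image fun w => s(u, w) := by
      intro e he
      rw [hSB, Finset.mem_filter] at he
      obtain ⟨he0, x, hx, y, hy, rfl⟩ := he
      have hf0 : f s(x, y) = 0 := (Finset.mem_filter.mp he0).2
      exact Finset.mem_biUnion.mpr ⟨x, hx,
        Finset.mem_image.mpr ⟨y, Finset.mem_filter.mpr ⟨hy, hf0⟩, rfl⟩⟩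
    calc SB.card ≤ _ := Finset.card_le_card hsub
      _ ≤ ∑ u ∈ A, ((B.filter fun w => f s(u, w) = 0).image fun w => s(u, w)).card :=
          Finset.card_biUnion_le
      _ ≤ ∑ u ∈ A, 1 := Finset.sum_le_sum fun u hu =>
          Finset.card_image_le.trans (hfew u hu)
      _ = A.card := by simp
  have hS1card : edgesWithin (⊤ : SimpleGraph (Fin n)) f 0 B = S1.card := by
    rw [edgesWithin]
    congr 1
    ext e
    rw [hS1, hE0]
    simp only [Finset.mem_filter]
    constructor
    · rintro ⟨h, h0, hx⟩
      exact ⟨⟨bridge _ _ _ h, h0⟩, hx⟩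
    · rintro ⟨⟨h, h0⟩, hx⟩
      exact ⟨bridge _ _ _ h, h0, hx⟩
  rw [hhalf, hS1card, hP, hQ]
  rw [hAcard] at hSIcard hS0card hSBcard
  rw [hQ] at hS0card
  omega
end
end

section
/- Let n ≥ 11 be an integer with n ≡ 3 (mod 4), let f be an edge-friendly binary edge labeling of the complete graph K_n with e_f(0) ≥ (C(n,2) − 1)/2, and let v be a vertex that is unlabeled under the induced partial vertex labeling. If every vertex of N_0(v) has at most one 0-edge to a vertex of N_1(v), then there is at least one 0-edge joining two vertices of N_1(v); indeed, the number of 0-edges with both endpoints in N_1(v) is at least (C(n,2) − 1)/2 − C((n−1)/2, 2) − (n−1)/2 − (n−1)/2 ≥ 1. -/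
/-!
Edge-friendly labelings (Krop, Lee, Raridan).  A binary edge labeling of a
graph `G` is `f : Sym2 V → Fin 2` (only its values on edges matter).  For
`i : Fin 2`, `nbr G f i v` is the set `N_i(v)` of neighbors of `v` joined to
`v` by an `i`-edge, `edgeCount G f i` is `e_f(i)`, and `vertexLabel G f v` is
the induced partial vertex label `f⁺(v)` (with `none` meaning unlabeled).
-/

open Finset

attribute [local instance] Classical.propDecidable

noncomputable section

open EdgeLabeling

section Aux

open Finset

lemma fin2_cases' (i : Fin 2) : i = 0 ∨ i = 1 := by
  fin_cases i <;> simp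

lemma sym2_offdiag_card {V : Type*} [DecidableEq V] (S : Finset V) :
    (S.sym2.filter fun e => ¬ e.IsDiag).card = S.card.choose 2 := by
  classical
  have hdiag : S.sym2.filter (fun e => e.IsDiag) = S.image Sym2.diag := by
    ext e
    induction e using Sym2.ind with
    | _ x y =>
      simp only [mem_filter, Finset.mk_mem_sym2_iff, Sym2.mk_isDiag_iff, mem_image]
      constructor
      · rintro ⟨⟨hx, _⟩, rfl⟩
        exact ⟨x, hx, rfl⟩
      · rintro ⟨a, ha, h⟩
        have h' : s(a, a) = s(x, y) := h
        rw [Sym2.eq_iff] at h'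
        rcases h' with ⟨rfl, rfl⟩ | ⟨rfl, rfl⟩ <;> exact ⟨⟨ha, ha⟩, rfl⟩
  have h2 := Finset.card_filter_add_card_filter_not
    (s := S.sym2) (p := fun e => e.IsDiag)
  have h3 : (S.image Sym2.diag).card = S.card :=
    Finset.card_image_of_injective _ Sym2.diag_injective
  have h4 := Finset.card_sym2 S
  have h5 : (S.card + 1).choose 2 = S.card + S.card.choose 2 := by
    rw [Nat.choose_succ_succ, Nat.choose_one_right]
  rw [hdiag] at h2
  omega

lemma edgeFinset_fintype_congr {V : Type*} (G : SimpleGraph V)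
    (i1 i2 : Fintype G.edgeSet) :
    @SimpleGraph.edgeFinset _ G i1 = @SimpleGraph.edgeFinset _ G i2 := by
  unfold SimpleGraph.edgeFinset
  congr 1
  exact Subsingleton.elim i1 i2

lemma card_filter_congr' {α : Type*} (p : α → Prop) (i1 i2 : DecidablePred p)
    (s t : Finset α) (h : s = t) :
    (@Finset.filter _ p i1 s).card = (@Finset.filter _ p i2 t).card := by
  subst h
  have h2 : i1 = i2 := Subsingleton.elim i1 i2
  subst h2
  rfl

end Aux

/-- For `n ≥ 11` with `n ≡ 3 (mod 4)`, if `f` is an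
edge-friendly labeling of `K_n` with `e_f(0) ≥ (C(n,2) - 1)/2`, `v` is
unlabeled, and every vertex of `N_0(v)` has at most one `0`-edge to `N_1(v)`,
then the number of `0`-edges inside `N_1(v)` is at least
`(C(n,2) - 1)/2 - C((n-1)/2, 2) - (n-1)/2 - (n-1)/2 ≥ 1`. -/
theorem zero_edges_in_N1_mod_three (n : ℕ) (hn : 11 ≤ n) (hmod : n % 4 = 3)
    (f : Sym2 (Fin n) → Fin 2) (hf : EdgeFriendly (⊤ : SimpleGraph (Fin n)) f)
    (h0 : (n.choose 2 - 1) / 2 ≤ edgeCount (⊤ : SimpleGraph (Fin n)) f 0)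
    (v : Fin n) (hv : Unlabeled (⊤ : SimpleGraph (Fin n)) f v)
    (hfew : ∀ u ∈ nbr (⊤ : SimpleGraph (Fin n)) f 0 v,
      ((nbr (⊤ : SimpleGraph (Fin n)) f 1 v).filter
        fun w => f s(u, w) = 0).card ≤ 1) :
    1 ≤ (n.choose 2 - 1) / 2 - ((n - 1) / 2).choose 2 - (n - 1) / 2
        - (n - 1) / 2 ∧
      (n.choose 2 - 1) / 2 - ((n - 1) / 2).choose 2 - (n - 1) / 2
          - (n - 1) / 2 ≤
        edgesWithin (⊤ : SimpleGraph (Fin n)) f 0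
          (nbr (⊤ : SimpleGraph (Fin n)) f 1 v) := by
  classical
  have heq : (nbr (⊤ : SimpleGraph (Fin n)) f 1 v).card
      = (nbr (⊤ : SimpleGraph (Fin n)) f 0 v).card := by
    unfold Unlabeled vertexLabel at hv
    split_ifs at hv with h1 h2
    all_goals first | omega | exact absurd hv (by simp)
  set N0 := nbr (⊤ : SimpleGraph (Fin n)) f 0 v with hN0
  set N1 := nbr (⊤ : SimpleGraph (Fin n)) f 1 v with hN1
  have hmem0 : ∀ u, u ∈ N0 ↔ v ≠ u ∧ f s(v, u) = 0 := by
    intro u; simp [hN0, nbr]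
  have hmem1 : ∀ u, u ∈ N1 ↔ v ≠ u ∧ f s(v, u) = 1 := by
    intro u; simp [hN1, nbr]
  have hdisj : ∀ u, u ∈ N0 → u ∈ N1 → False := by
    intro u h0' h1'
    rw [hmem0] at h0'; rw [hmem1] at h1'
    exact absurd (h0'.2.symm.trans h1'.2) (by decide)
  have hcover : N0 ∪ N1 = Finset.univ.erase v := by
    ext u
    rcases fin2_cases' (f s(v, u)) with h | h <;>
      simp [Finset.mem_union, hmem0, hmem1, Finset.mem_erase, h, ne_comm]
  have hdisj' : Disjoint N0 N1 :=
    Finset.disjoint_left.mpr fun {u} ha hb => hdisj u ha hb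
  have hcard_sum : N0.card + N1.card = n - 1 := by
    rw [← Finset.card_union_of_disjoint hdisj', hcover,
      Finset.card_erase_of_mem (Finset.mem_univ v), Finset.card_univ,
      Fintype.card_fin]
  have hn0 : N0.card = (n - 1) / 2 := by omega
  have hn1 : N1.card = (n - 1) / 2 := by omega
  set E0 := (⊤ : SimpleGraph (Fin n)).edgeFinset with hE0
  have hedge : ∀ x y : Fin n, s(x, y) ∈ E0 ↔ x ≠ y := by
    intro x y; simp [hE0]
  set A := E0.filter (fun e => f e = 0 ∧ v ∈ e) with hA
  set B := E0.filter (fun e => f e = 0 ∧ ∃ x ∈ N0, ∃ y ∈ N0, e = s(x, y)) with hB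
  set C := E0.filter (fun e => f e = 0 ∧ ∃ x ∈ N0, ∃ y ∈ N1, e = s(x, y)) with hC
  set D := E0.filter (fun e => f e = 0 ∧ ∃ x ∈ N1, ∃ y ∈ N1, e = s(x, y)) with hD
  have hsubset : E0.filter (fun e => f e = 0) ⊆ A ∪ B ∪ C ∪ D := by
    intro e he
    induction e using Sym2.ind with
    | _ x y =>
      rw [Finset.mem_filter] at he
      obtain ⟨heE, hef⟩ := he
      have hxy : x ≠ y := (hedge x y).mp heE
      simp only [Finset.mem_union, hA, hB, hC, hD, Finset.mem_filter]
      by_cases hxv : x = v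
      · subst hxv
        exact Or.inl (Or.inl (Or.inl ⟨heE, hef, Sym2.mem_mk_left x y⟩))
      by_cases hyv : y = v
      · subst hyv
        exact Or.inl (Or.inl (Or.inl ⟨heE, hef, Sym2.mem_mk_right x y⟩))
      have hx : x ∈ N0 ∨ x ∈ N1 := by
        rcases fin2_cases' (f s(v, x)) with h | h
        · exact Or.inl ((hmem0 x).mpr ⟨Ne.symm hxv, h⟩)
        · exact Or.inr ((hmem1 x).mpr ⟨Ne.symm hxv, h⟩)
      have hy : y ∈ N0 ∨ y ∈ N1 := by
        rcases fin2_cases' (f s(v, y)) with h | h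
        · exact Or.inl ((hmem0 y).mpr ⟨Ne.symm hyv, h⟩)
        · exact Or.inr ((hmem1 y).mpr ⟨Ne.symm hyv, h⟩)
      rcases hx with hx | hx <;> rcases hy with hy | hy
      · exact Or.inl (Or.inl (Or.inr ⟨heE, hef, x, hx, y, hy, rfl⟩))
      · exact Or.inl (Or.inr ⟨heE, hef, x, hx, y, hy, rfl⟩)
      · exact Or.inl (Or.inr ⟨heE, hef, y, hy, x, hx, Sym2.eq_swap⟩)
      · exact Or.inr ⟨heE, hef, x, hx, y, hy, rfl⟩
  have hunion_card : (A ∪ B ∪ C ∪ D).card ≤ A.card + B.card + C.card + D.card := by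
    have h1 := Finset.card_union_le (A ∪ B ∪ C) D
    have h2 := Finset.card_union_le (A ∪ B) C
    have h3 := Finset.card_union_le A B
    omega
  have hcount : edgeCount (⊤ : SimpleGraph (Fin n)) f 0
      ≤ A.card + B.card + C.card + D.card := by
    have hec : edgeCount (⊤ : SimpleGraph (Fin n)) f 0
        = (E0.filter fun e => f e = 0).card := by
      unfold edgeCount
      rw [hE0]
      exact card_filter_congr' _ _ _ _ _ (edgeFinset_fintype_congr _ _ _)
    rw [hec]
    exact le_trans (Finset.card_le_card hsubset) hunion_card
  have hAcard : A.card ≤ (n - 1) / 2 := by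
    have hsub : A ⊆ N0.image (fun u => s(v, u)) := by
      intro e he
      rw [hA, Finset.mem_filter] at he
      obtain ⟨heE, hef, hve⟩ := he
      obtain ⟨u, rfl⟩ := Sym2.mem_iff_exists.mp hve
      have hvu : v ≠ u := (hedge v u).mp heE
      exact Finset.mem_image.mpr ⟨u, (hmem0 u).mpr ⟨hvu, hef⟩, rfl⟩
    calc A.card ≤ (N0.image (fun u => s(v, u))).card := Finset.card_le_card hsub
      _ ≤ N0.card := Finset.card_image_le
      _ = (n - 1) / 2 := hn0
  have hBcard : B.card ≤ ((n - 1) / 2).choose 2 := by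
    have hsub : B ⊆ N0.sym2.filter fun e => ¬ e.IsDiag := by
      intro e he
      rw [hB, Finset.mem_filter] at he
      obtain ⟨heE, hef, x, hx, y, hy, rfl⟩ := he
      have hxy : x ≠ y := (hedge x y).mp heE
      simp [Finset.mk_mem_sym2_iff, hx, hy, Sym2.mk_isDiag_iff, hxy]
    calc B.card ≤ (N0.sym2.filter fun e => ¬ e.IsDiag).card :=
          Finset.card_le_card hsub
      _ = N0.card.choose 2 := sym2_offdiag_card N0
      _ = ((n - 1) / 2).choose 2 := by rw [hn0]
  have hCcard : C.card ≤ (n - 1) / 2 := by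
    have hsub : C ⊆ N0.biUnion
        (fun u => (N1.filter fun w => f s(u, w) = 0).image (fun w => s(u, w))) := by
      intro e he
      rw [hC, Finset.mem_filter] at he
      obtain ⟨heE, hef, x, hx, y, hy, rfl⟩ := he
      exact Finset.mem_biUnion.mpr
        ⟨x, hx, Finset.mem_image.mpr ⟨y, Finset.mem_filter.mpr ⟨hy, hef⟩, rfl⟩⟩
    refine le_trans (Finset.card_le_card hsub) (le_trans Finset.card_biUnion_le ?_)
    calc ∑ u ∈ N0, ((N1.filter fun w => f s(u, w) = 0).image (fun w => s(u, w))).card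
        ≤ ∑ u ∈ N0, 1 := Finset.sum_le_sum
          (fun u hu => le_trans Finset.card_image_le (hfew u hu))
      _ = N0.card := by simp
      _ = (n - 1) / 2 := hn0
  have hDcard : edgesWithin (⊤ : SimpleGraph (Fin n)) f 0 N1 = D.card := by
    unfold edgesWithin
    rw [hD, hE0]
    exact card_filter_congr' _ _ _ _ _ (edgeFinset_fintype_congr _ _ _)
  have harith : ((n - 1) / 2).choose 2 + (n - 1) / 2 + (n - 1) / 2 + 1
      ≤ (n.choose 2 - 1) / 2 := by
    obtain ⟨k, rfl⟩ : ∃ k, n = 4 * k + 3 := ⟨n / 4, by omega⟩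
    have hk : 2 ≤ k := by omega
    have hkk : k ≤ k * k := Nat.le_mul_of_pos_left k (by omega)
    rw [Nat.choose_two_right, Nat.choose_two_right]
    have e1 : (4 * k + 3) * (4 * k + 3 - 1) = 16 * (k * k) + 20 * k + 6 := by
      have h : 4 * k + 3 - 1 = 4 * k + 2 := by omega
      rw [h]; ring
    have hm : (4 * k + 3 - 1) / 2 = 2 * k + 1 := by omega
    rw [hm]
    have e2 : (2 * k + 1) * (2 * k + 1 - 1) = 4 * (k * k) + 2 * k := by
      have h : 2 * k + 1 - 1 = 2 * k := by omega
      rw [h]; ring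
    omega
  exact ⟨by omega, by omega⟩
end
end
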